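/- arXiv:1910.13033 — 4 statements merged into one kernel-verified Lean document; each statement's English description precedes it below -/
import Mathlib

section
/- Weak-strong principle with a subspace determining boundedness (Theorem 6.1, e ⇒ a): Let E be a complex Banach space, Ω ⊆ ℂ^d open and f : ℂ^d → E a function. Suppose G is a linear subspace of the continuous dual E' which determines boundedness, i.e., every set S ⊆ E with sup_{x ∈ S} |e'(x)| < ∞ for all e' ∈ G is norm-bounded. If for every e' ∈ G the scalar function e' ∘ f : Ω → ℂ is holomorphic on Ω, then f is holomorphic on Ω. -/
open Metric Filter Topology

private lemma norm_dslope_le_of_bound {f : ℂ → ℂ} {c : ℂ} {R B : ℝ}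
    (hd : DifferentiableOn ℂ f (ball c R)) (hR : 0 < R)
    (hf : ∀ x ∈ ball c R, ‖f x - f c‖ ≤ B) :
    ∀ x ∈ ball c R, ‖dslope f c x‖ ≤ B / R := by
  intro x hx
  refine le_of_forall_pos_le_add fun ε hε => ?_
  have hmaps : Set.MapsTo f (ball c R) (ball (f c) (B + ε * R)) := fun y hy => by
    have h1 := hf y hy
    rw [mem_ball, dist_eq_norm]
    nlinarith [mul_pos hε hR]
  have h2 := Complex.norm_dslope_le_div_of_mapsTo_ball hd (hmaps.mono_right ball_subset_closedBall) hx
  refine h2.trans (le_of_eq ?_)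
  field_simp

private lemma taylor2_bound {ψ : ℂ → ℂ} {R M : ℝ} (hR : 2 ≤ R)
    (hd : DifferentiableOn ℂ ψ (ball (0 : ℂ) R))
    (hb : ∀ t ∈ ball (0 : ℂ) R, ‖ψ t‖ ≤ M) :
    ‖ψ 1 - ψ 0 - deriv ψ 0‖ ≤ 4 * M / R ^ 2 := by
  have hR0 : (0 : ℝ) < R := lt_of_lt_of_le (by norm_num) hR
  have h0 : (0 : ℂ) ∈ ball (0 : ℂ) R := mem_ball_self hR0
  have h1 : (1 : ℂ) ∈ ball (0 : ℂ) R := by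
    simp only [mem_ball, dist_eq_norm, sub_zero, norm_one]
    linarith
  set g := dslope ψ 0 with hgdef
  have hgd : DifferentiableOn ℂ g (ball (0 : ℂ) R) :=
    (Complex.differentiableOn_dslope (isOpen_ball.mem_nhds h0)).mpr hd
  have hgb : ∀ x ∈ ball (0 : ℂ) R, ‖g x‖ ≤ 2 * M / R := by
    have h2 : ∀ x ∈ ball (0 : ℂ) R, ‖ψ x - ψ 0‖ ≤ 2 * M := fun x hx =>
      (norm_sub_le _ _).trans (by linarith [hb x hx, hb 0 h0])
    exact norm_dslope_le_of_bound hd hR0 h2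
  have hgb2 : ∀ x ∈ ball (0 : ℂ) R, ‖g x - g 0‖ ≤ 2 * M / R + 2 * M / R := fun x hx =>
    (norm_sub_le _ _).trans (add_le_add (hgb x hx) (hgb 0 h0))
  have hfin := norm_dslope_le_of_bound hgd hR0 hgb2 1 h1
  have e1 : dslope g 0 1 = g 1 - g 0 := by
    rw [dslope_of_ne _ one_ne_zero, slope_def_field]
    simp
  have e2 : g 1 = ψ 1 - ψ 0 := by
    rw [hgdef, dslope_of_ne _ one_ne_zero, slope_def_field]
    simp
  have e3 : g 0 = deriv ψ 0 := dslope_same ψ 0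
  rw [e1, e2, e3] at hfin
  refine hfin.trans (le_of_eq ?_)
  field_simp
  ring

private lemma dslope_dslope_bound {ψ : ℂ → ℂ} {R M : ℝ}
    (hR : 0 < R) (hd : DifferentiableOn ℂ ψ (ball (0 : ℂ) R))
    (hb : ∀ t ∈ ball (0 : ℂ) R, ‖ψ t‖ ≤ M)
    {a b : ℂ} (ha : ‖a‖ < R / 4) (hbb : ‖b‖ < R / 4) :
    ‖dslope (dslope ψ 0) b a‖ ≤ 8 * M / R ^ 2 := by
  have h0 : (0 : ℂ) ∈ ball (0 : ℂ) R := mem_ball_self hR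
  set ρ := dslope ψ 0 with hρdef
  have hρd : DifferentiableOn ℂ ρ (ball (0 : ℂ) R) :=
    (Complex.differentiableOn_dslope (isOpen_ball.mem_nhds h0)).mpr hd
  have hρb : ∀ x ∈ ball (0 : ℂ) R, ‖ρ x‖ ≤ 2 * M / R := by
    have h2 : ∀ x ∈ ball (0 : ℂ) R, ‖ψ x - ψ 0‖ ≤ 2 * M := fun x hx =>
      (norm_sub_le _ _).trans (by linarith [hb x hx, hb 0 h0])
    exact fun x hx => norm_dslope_le_of_bound hd hR h2 x hx
  have hsub : ball b (R / 2) ⊆ ball (0 : ℂ) R := fun x hx => by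
    rw [mem_ball, dist_eq_norm] at hx ⊢
    calc ‖x - 0‖ = ‖(x - b) + b‖ := by ring_nf
      _ ≤ ‖x - b‖ + ‖b‖ := norm_add_le _ _
      _ < R := by linarith
  have hbmem : b ∈ ball (0 : ℂ) R := by
    rw [mem_ball, dist_eq_norm, sub_zero]; linarith
  have hρd2 : DifferentiableOn ℂ ρ (ball b (R / 2)) := hρd.mono hsub
  have hρb2 : ∀ x ∈ ball b (R / 2), ‖ρ x - ρ b‖ ≤ 2 * M / R + 2 * M / R := fun x hx =>
    (norm_sub_le _ _).trans (add_le_add (hρb x (hsub hx)) (hρb b hbmem))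
  have hamem : a ∈ ball b (R / 2) := by
    rw [mem_ball, dist_eq_norm]
    calc ‖a - b‖ ≤ ‖a‖ + ‖b‖ := norm_sub_le _ _
      _ < R / 2 := by linarith
  have hfin := norm_dslope_le_of_bound hρd2 (by linarith) hρb2 a hamem
  refine hfin.trans (le_of_eq ?_)
  field_simp
  ring

/-- Weak-strong principle: if `G ⊆ E'` is a subspace of the dual determining
boundedness and `e' ∘ f` is holomorphic for every `e' ∈ G`, then `f` is holomorphic. -/
theorem holomorphic_of_weakly_holomorphic_determining
    {E : Type*} [NormedAddCommGroup E] [NormedSpace ℂ E] [CompleteSpace E]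
    {d : ℕ} {Ω : Set (Fin d → ℂ)} (hΩ : IsOpen Ω)
    (G : Submodule ℂ (E →L[ℂ] ℂ))
    (hG : ∀ S : Set E, (∀ e' ∈ G, BddAbove ((fun x => ‖e' x‖) '' S)) →
      Bornology.IsBounded S)
    {f : (Fin d → ℂ) → E}
    (hf : ∀ e' ∈ G, ∀ z ∈ Ω, DifferentiableAt ℂ (fun w => e' (f w)) z) :
    ∀ z ∈ Ω, DifferentiableAt ℂ f z := by
  intro z hz
  obtain ⟨ε, hε, hball⟩ := Metric.isOpen_iff.mp hΩ z hz
  set r : ℝ := ε / 3 with hrdef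
  have hr0 : 0 < r := by positivity
  have hsub : closedBall z (2 * r) ⊆ Ω := fun w hw => by
    apply hball
    rw [mem_ball]
    calc dist w z ≤ 2 * r := mem_closedBall.mp hw
      _ < ε := by rw [hrdef]; linarith
  -- uniform bounds for each functional on the closed ball
  have hMex : ∀ e' : E →L[ℂ] ℂ, e' ∈ G →
      ∃ M : ℝ, ∀ w ∈ closedBall z (2 * r), ‖e' (f w)‖ ≤ M := by
    intro e' he'
    have hc : ContinuousOn (fun w => e' (f w)) (closedBall z (2 * r)) :=
      fun w hw => ((hf e' he' w (hsub hw)).continuousAt).continuousWithinAt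
    exact (isCompact_closedBall z (2 * r)).exists_bound_of_continuousOn hc
  choose M hM using hMex
  -- slices are holomorphic and bounded
  have hψ : ∀ (e' : E →L[ℂ] ℂ) (he' : e' ∈ G) (v : Fin d → ℂ) (R : ℝ),
      (∀ s : ℂ, ‖s‖ < R → ‖s • v‖ ≤ 2 * r) →
      DifferentiableOn ℂ (fun s : ℂ => e' (f (z + s • v))) (ball (0 : ℂ) R) ∧
        ∀ s ∈ ball (0 : ℂ) R, ‖e' (f (z + s • v))‖ ≤ M e' he' := by
    intro e' he' v R hvR
    have hmem : ∀ s : ℂ, s ∈ ball (0 : ℂ) R → z + s • v ∈ closedBall z (2 * r) := by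
      intro s hs
      rw [mem_ball, dist_zero_right] at hs
      rw [mem_closedBall, dist_eq_norm, add_sub_cancel_left]
      exact hvR s hs
    constructor
    · intro s hs
      have h1 : DifferentiableAt ℂ (fun s : ℂ => z + s • v) s :=
        (differentiableAt_id.smul_const v).const_add z
      exact ((hf e' he' _ (hsub (hmem s hs))).comp s h1).differentiableWithinAt
    · exact fun s hs => hM e' he' _ (hmem s hs)
  -- slice derivative at zero
  have hψderiv : ∀ (e' : E →L[ℂ] ℂ), e' ∈ G → ∀ v : Fin d → ℂ,
      deriv (fun s : ℂ => e' (f (z + s • v))) 0 = fderiv ℂ (fun w => e' (f w)) z v := by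
    intro e' he' v
    have hline : HasDerivAt (fun s : ℂ => z + s • v) v 0 := by
      simpa using ((hasDerivAt_id (0 : ℂ)).smul_const v).const_add z
    have hφ : HasFDerivAt (fun w => e' (f w)) (fderiv ℂ (fun w => e' (f w)) z)
        ((fun s : ℂ => z + s • v) 0) := by
      simpa using (hf e' he' z hz).hasFDerivAt
    have hcomp := hφ.comp_hasDerivAt 0 hline
    simpa [Function.comp_def] using hcomp.deriv
  -- construct directional derivatives
  have hvex : ∀ i : Fin d, ∃ vi : E, ∀ e' : E →L[ℂ] ℂ, e' ∈ G →
      e' vi = fderiv ℂ (fun w => e' (f w)) z (fun j => if i = j then (1 : ℂ) else 0) := by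
    intro i
    set u : Fin d → ℂ := fun j => if i = j then (1 : ℂ) else 0 with hu
    have hu1 : ‖u‖ ≤ 1 := by
      refine (pi_norm_le_iff_of_nonneg zero_le_one).mpr fun j => ?_
      rw [hu]
      dsimp only
      split <;> simp
    have hucond : ∀ s : ℂ, ‖s‖ < 2 * r → ‖s • u‖ ≤ 2 * r := by
      intro s hs
      rw [norm_smul]
      calc ‖s‖ * ‖u‖ ≤ ‖s‖ * 1 := by
            exact mul_le_mul_of_nonneg_left hu1 (norm_nonneg s)
        _ ≤ 2 * r := by linarith
    set t : ℕ → ℂ := fun n => ((r / (n + 4) : ℝ) : ℂ) with ht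
    have htnorm : ∀ n : ℕ, ‖t n‖ = r / (n + 4) := by
      intro n
      rw [ht]
      rw [Complex.norm_real, Real.norm_eq_abs, abs_of_pos (by positivity)]
    have htlt : ∀ n : ℕ, ‖t n‖ < r / 2 := by
      intro n
      rw [htnorm]
      rw [div_lt_div_iff₀ (by positivity) (by norm_num)]
      nlinarith [Nat.cast_nonneg (α := ℝ) n]
    have htne : ∀ n : ℕ, t n ≠ 0 := by
      intro n h
      have h2 := htnorm n
      rw [h, norm_zero] at h2
      have : (0 : ℝ) < r / (n + 4) := by positivity
      linarith [h2 ▸ this]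
    set q : ℕ → E := fun n => (t n)⁻¹ • (f (z + t n • u) - f z) with hq
    -- weak bound on the double difference quotients
    set S₁ : Set E :=
      {x : E | ∃ n m : ℕ, t n ≠ t m ∧ x = (t n - t m)⁻¹ • (q n - q m)} with hS₁
    have hq' : ∀ (e' : E →L[ℂ] ℂ), ∀ k : ℕ,
        e' (q k) = dslope (fun s : ℂ => e' (f (z + s • u))) 0 (t k) := by
      intro e' k
      rw [dslope_of_ne _ (htne k), slope_def_field, hq]
      simp only [map_smul, map_sub, smul_eq_mul]
      have h0 : z + (0 : ℂ) • u = z := by simp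
      rw [h0, sub_zero]
      field_simp
    have hbdd1 : ∀ e' ∈ G, BddAbove ((fun x => ‖e' x‖) '' S₁) := by
      intro e' he'
      refine ⟨8 * M e' he' / (2 * r) ^ 2, ?_⟩
      rintro y ⟨x, ⟨n, m, hnm, rfl⟩, rfl⟩
      have hkey : e' ((t n - t m)⁻¹ • (q n - q m)) =
          dslope (dslope (fun s : ℂ => e' (f (z + s • u))) 0) (t m) (t n) := by
        rw [map_smul, map_sub, smul_eq_mul, hq' e' n, hq' e' m,
          dslope_of_ne _ hnm, slope_def_field]
        ring
      dsimp only
      rw [hkey]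
      have hsl := hψ e' he' u (2 * r) hucond
      exact dslope_dslope_bound (by positivity) hsl.1 hsl.2
        (by rw [show (2 * r) / 4 = r / 2 by ring]; exact htlt n)
        (by rw [show (2 * r) / 4 = r / 2 by ring]; exact htlt m)
    obtain ⟨K, hK⟩ := (hG S₁ hbdd1).exists_norm_le
    have hqdiff : ∀ n m : ℕ, ‖q n - q m‖ ≤ K * ‖t n - t m‖ := by
      intro n m
      rcases eq_or_ne (t n) (t m) with heq | hne
      · have hqeq : q n = q m := by rw [hq]; dsimp only; rw [heq]
        rw [hqeq, heq]
        simp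
      · have hx : (t n - t m)⁻¹ • (q n - q m) ∈ S₁ := ⟨n, m, hne, rfl⟩
        have h1 := hK _ hx
        rw [norm_smul, norm_inv] at h1
        have hpos : (0 : ℝ) < ‖t n - t m‖ := norm_pos_iff.mpr (sub_ne_zero.mpr hne)
        have h2 : ‖t n - t m‖ * (‖t n - t m‖⁻¹ * ‖q n - q m‖) ≤ ‖t n - t m‖ * K :=
          mul_le_mul_of_nonneg_left h1 hpos.le
        rw [← mul_assoc, mul_inv_cancel₀ hpos.ne', one_mul] at h2
        linarith
    have httend : Tendsto t atTop (𝓝 0) := by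
      have h1 : Tendsto (fun n : ℕ => r / ((n : ℝ) + 4)) atTop (𝓝 0) := by
        have h2 := (tendsto_const_div_atTop_nhds_zero_nat r).comp (tendsto_add_atTop_nat 4)
        simpa [Function.comp_def] using h2
      have h4 := (Complex.continuous_ofReal.tendsto 0).comp h1
      simpa [ht, Function.comp_def] using h4
    have hqc : CauchySeq q := by
      rw [Metric.cauchySeq_iff]
      intro δ hδ
      set K' := max K 0 with hK'
      have hK'0 : (0 : ℝ) ≤ K' := le_max_right _ _
      obtain ⟨N, hN⟩ := Metric.cauchySeq_iff.mp httend.cauchySeq (δ / (K' + 1))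
        (by positivity)
      refine ⟨N, fun n hn m hm => ?_⟩
      have h1 := hqdiff n m
      have h2 := hN n hn m hm
      rw [dist_eq_norm] at h2 ⊢
      calc ‖q n - q m‖ ≤ K * ‖t n - t m‖ := h1
        _ ≤ K' * ‖t n - t m‖ := mul_le_mul_of_nonneg_right (le_max_left _ _) (norm_nonneg _)
        _ ≤ K' * (δ / (K' + 1)) := mul_le_mul_of_nonneg_left h2.le hK'0
        _ < δ := by
            rw [mul_div_assoc']
            rw [div_lt_iff₀ (by positivity)]
            nlinarith
    obtain ⟨vi, hvi⟩ := cauchySeq_tendsto_of_complete hqc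
    refine ⟨vi, fun e' he' => ?_⟩
    have hA : Tendsto (fun n => e' (q n)) atTop (𝓝 (e' vi)) :=
      (e'.continuous.tendsto vi).comp hvi
    have hdiff0 : DifferentiableAt ℂ (fun s : ℂ => e' (f (z + s • u))) 0 :=
      (hψ e' he' u (2 * r) hucond).1.differentiableAt
        (isOpen_ball.mem_nhds (mem_ball_self (by positivity)))
    have hρc : ContinuousAt (dslope (fun s : ℂ => e' (f (z + s • u))) 0) 0 :=
      continuousAt_dslope_same.mpr hdiff0
    have hB : Tendsto (fun n => dslope (fun s : ℂ => e' (f (z + s • u))) 0 (t n)) atTop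
        (𝓝 (dslope (fun s : ℂ => e' (f (z + s • u))) 0 0)) := hρc.tendsto.comp httend
    have hA' : Tendsto (fun n => dslope (fun s : ℂ => e' (f (z + s • u))) 0 (t n)) atTop
        (𝓝 (e' vi)) := by
      refine hA.congr fun n => ?_
      exact hq' e' n
    have h5 : e' vi = dslope (fun s : ℂ => e' (f (z + s • u))) 0 0 :=
      tendsto_nhds_unique hA' hB
    rw [h5, dslope_same]
    exact hψderiv e' he' u
  choose v hv using hvex
  -- the candidate derivative
  set L : (Fin d → ℂ) →L[ℂ] E :=
    ∑ i : Fin d, (ContinuousLinearMap.proj i : (Fin d → ℂ) →L[ℂ] ℂ).smulRight (v i) with hL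
  have hLapp : ∀ h : Fin d → ℂ, L h = ∑ i : Fin d, h i • v i := by
    intro h
    rw [hL, ContinuousLinearMap.sum_apply]
    simp
  have heL : ∀ e' : E →L[ℂ] ℂ, e' ∈ G → ∀ h : Fin d → ℂ,
      e' (L h) = fderiv ℂ (fun w => e' (f w)) z h := by
    intro e' he' h
    rw [hLapp, map_sum]
    conv_rhs => rw [pi_eq_sum_univ h, map_sum]
    refine Finset.sum_congr rfl fun i _ => ?_
    rw [map_smul, map_smul, hv i e' he']
  -- the remainder set
  set S₂ : Set E := {x : E | ∃ h : Fin d → ℂ, h ≠ 0 ∧ ‖h‖ ≤ r / 2 ∧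
      x = (((‖h‖ : ℂ)) ^ 2)⁻¹ • (f (z + h) - f z - L h)} with hS₂
  have hbdd2 : ∀ e' ∈ G, BddAbove ((fun x => ‖e' x‖) '' S₂) := by
    intro e' he'
    refine ⟨4 * M e' he' / r ^ 2, ?_⟩
    rintro y ⟨x, ⟨h, hh0, hhr, rfl⟩, rfl⟩
    have hhn : (0 : ℝ) < ‖h‖ := norm_pos_iff.mpr hh0
    have hR2 : (2 : ℝ) ≤ r / ‖h‖ := by
      rw [le_div_iff₀ hhn]; linarith
    have hcond : ∀ s : ℂ, ‖s‖ < r / ‖h‖ → ‖s • h‖ ≤ 2 * r := by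
      intro s hs
      rw [norm_smul]
      have := (lt_div_iff₀ hhn).mp hs
      linarith
    have hsl := hψ e' he' h (r / ‖h‖) hcond
    have htay := taylor2_bound hR2 hsl.1 hsl.2
    simp only [one_smul, zero_smul, add_zero] at htay
    rw [hψderiv e' he' h] at htay
    dsimp only
    rw [map_smul, smul_eq_mul, norm_mul, norm_inv, norm_pow, Complex.norm_real,
      Real.norm_eq_abs, abs_of_pos hhn]
    rw [map_sub, map_sub, heL e' he' h]
    calc (‖h‖ ^ 2)⁻¹ * ‖e' (f (z + h)) - e' (f z) - fderiv ℂ (fun w => e' (f w)) z h‖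
        ≤ (‖h‖ ^ 2)⁻¹ * (4 * M e' he' / (r / ‖h‖) ^ 2) := by
          exact mul_le_mul_of_nonneg_left htay (by positivity)
      _ = 4 * M e' he' / r ^ 2 := by
          field_simp
  obtain ⟨K₂, hK₂⟩ := (hG S₂ hbdd2).exists_norm_le
  set K' := max K₂ 0 with hK'def
  have hK'0 : (0 : ℝ) ≤ K' := le_max_right _ _
  have hest : ∀ h : Fin d → ℂ, ‖h‖ ≤ r / 2 →
      ‖f (z + h) - f z - L h‖ ≤ K' * ‖h‖ ^ 2 := by
    intro h hhr
    rcases eq_or_ne h 0 with rfl | hh0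
    · simp
    · have hhn : (0 : ℝ) < ‖h‖ := norm_pos_iff.mpr hh0
      have hx : (((‖h‖ : ℂ)) ^ 2)⁻¹ • (f (z + h) - f z - L h) ∈ S₂ := ⟨h, hh0, hhr, rfl⟩
      have h1 := hK₂ _ hx
      rw [norm_smul, norm_inv, norm_pow, Complex.norm_real, Real.norm_eq_abs,
        abs_of_pos hhn] at h1
      calc ‖f (z + h) - f z - L h‖
          = ‖h‖ ^ 2 * ((‖h‖ ^ 2)⁻¹ * ‖f (z + h) - f z - L h‖) := by field_simp
        _ ≤ ‖h‖ ^ 2 * K₂ := mul_le_mul_of_nonneg_left h1 (by positivity)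
        _ ≤ ‖h‖ ^ 2 * K' := mul_le_mul_of_nonneg_left (le_max_left _ _) (by positivity)
        _ = K' * ‖h‖ ^ 2 := by ring
  have hF : HasFDerivAt f L z := by
    rw [hasFDerivAt_iff_isLittleO_nhds_zero, Asymptotics.isLittleO_iff]
    intro c hc
    rw [Metric.eventually_nhds_iff]
    refine ⟨min (r / 2) (c / (K' + 1)), by positivity, fun h hh => ?_⟩
    rw [dist_zero_right] at hh
    have hh1 : ‖h‖ ≤ r / 2 := le_of_lt (lt_of_lt_of_le hh (min_le_left _ _))
    have hh2 : ‖h‖ < c / (K' + 1) := lt_of_lt_of_le hh (min_le_right _ _)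
    calc ‖f (z + h) - f z - L h‖ ≤ K' * ‖h‖ ^ 2 := hest h hh1
      _ = K' * ‖h‖ * ‖h‖ := by ring
      _ ≤ c * ‖h‖ := by
          refine mul_le_mul_of_nonneg_right ?_ (norm_nonneg _)
          have h3 : K' * ‖h‖ ≤ K' * (c / (K' + 1)) :=
            mul_le_mul_of_nonneg_left hh2.le hK'0
          refine h3.trans ?_
          rw [mul_div_assoc', div_le_iff₀ (by positivity)]
          nlinarith
  exact hF.differentiableAt
end

section
/- Local power series expansions imply holomorphy (Theorem 6.1, g ⇒ a): Let E be a complex Banach space, Ω ⊆ ℂ^d open and f : ℂ^d → E a function. Suppose that for every z ∈ Ω there are R ∈ (0,∞)^d with 𝔻_R(z) ⊆ Ω and a family (a_β)_{β ∈ ℕ^d} in E such that for every w ∈ 𝔻_R(z) the family ( a_β (w − z)^β )_{β ∈ ℕ^d} is summable in E with sum f(w). Then f is holomorphic on Ω. -/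
open scoped BigOperators

namespace HolLPS

variable {d : ℕ}

def idxList (β : Fin d → ℕ) : List (Fin d) :=
  (List.finRange d).flatMap fun k => List.replicate (β k) k

lemma idxList_length (β : Fin d → ℕ) : (idxList β).length = ∑ k, β k := by
  simp [idxList, List.length_flatMap, Fin.sum_univ_def, Function.comp_def]

lemma ofFn_get_cast {α : Type*} {n : ℕ} (L : List α) (h : L.length = n) :
    List.ofFn (fun i : Fin n => L.get (Fin.cast h.symm i)) = L := by
  subst h; simp [List.ofFn_get]

lemma idxList_prod {M : Type*} [CommMonoid M] (β : Fin d → ℕ) (y : Fin d → M) :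
    ((idxList β).map y).prod = ∏ k, y k ^ β k := by
  simp only [idxList, List.map_flatMap, List.flatMap_def, List.map_flatten, List.prod_flatten,
    List.map_map, Function.comp_def, List.map_replicate, List.prod_replicate,
    Fin.prod_univ_def]

end HolLPS

namespace HolLPS

variable {E : Type*} [NormedAddCommGroup E] [NormedSpace ℂ E]

noncomputable def P (a : (Fin d → ℕ) → E) (n : ℕ) (β : Fin d → ℕ) (h : ∑ k, β k = n) :
    ContinuousMultilinearMap ℂ (fun _ : Fin n => (Fin d → ℂ)) E :=
  ((ContinuousMultilinearMap.mkPiAlgebraFin ℂ n ℂ).compContinuousLinearMap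
    (fun i => ContinuousLinearMap.proj
      ((idxList β).get (Fin.cast ((idxList_length β).trans h).symm i)))).smulRight (a β)

lemma P_apply (a : (Fin d → ℕ) → E) (n : ℕ) (β : Fin d → ℕ) (h : ∑ k, β k = n)
    (v : Fin n → (Fin d → ℂ)) :
    P a n β h v = (List.ofFn fun i =>
      v i ((idxList β).get (Fin.cast ((idxList_length β).trans h).symm i))).prod • a β := by
  rfl

lemma P_apply_const (a : (Fin d → ℕ) → E) (n : ℕ) (β : Fin d → ℕ) (h : ∑ k, β k = n)
    (y : Fin d → ℂ) :
    P a n β h (fun _ => y) = (∏ k, y k ^ β k) • a β := by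
  rw [P_apply]
  congr 1
  have : (List.ofFn fun i : Fin n =>
      y ((idxList β).get (Fin.cast ((idxList_length β).trans h).symm i)))
      = ((List.ofFn fun i : Fin n =>
          (idxList β).get (Fin.cast ((idxList_length β).trans h).symm i)).map y) := by
    simp [List.map_ofFn, Function.comp_def]
  rw [this, ofFn_get_cast, idxList_prod]
  exact (idxList_length β).trans h

lemma P_norm (a : (Fin d → ℕ) → E) (n : ℕ) (β : Fin d → ℕ) (h : ∑ k, β k = n) :
    ‖P a n β h‖ ≤ ‖a β‖ := by
  refine ContinuousMultilinearMap.opNorm_le_bound (norm_nonneg _) fun v => ?_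
  rw [P_apply, norm_smul]
  rw [mul_comm]
  gcongr
  calc ‖(List.ofFn fun i =>
      v i ((idxList β).get (Fin.cast ((idxList_length β).trans h).symm i))).prod‖
      = ∏ i : Fin n, ‖v i ((idxList β).get (Fin.cast ((idxList_length β).trans h).symm i))‖ := by
        rw [List.prod_ofFn]; exact norm_prod _ _
    _ ≤ ∏ i : Fin n, ‖v i‖ := by
        refine Finset.prod_le_prod (fun i _ => norm_nonneg _) fun i _ => norm_le_pi_norm _ _

end HolLPS

namespace HolLPS

variable {E : Type*} [NormedAddCommGroup E] [NormedSpace ℂ E]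

noncomputable def pser (a : (Fin d → ℕ) → E) : FormalMultilinearSeries ℂ (Fin d → ℂ) E :=
  fun n => ∑ β ∈ (Finset.Nat.antidiagonalTuple d n).attach,
    P a n β.1 (Finset.Nat.mem_antidiagonalTuple.mp β.2)

lemma pser_norm_le (a : (Fin d → ℕ) → E) (n : ℕ) :
    ‖pser a n‖ ≤ ∑ β ∈ Finset.Nat.antidiagonalTuple d n, ‖a β‖ := by
  rw [pser, ← Finset.sum_attach (Finset.Nat.antidiagonalTuple d n) fun β => ‖a β‖]
  exact (norm_sum_le _ _).trans (Finset.sum_le_sum fun β _ => P_norm a n β.1 _)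

lemma pser_apply_const (a : (Fin d → ℕ) → E) (n : ℕ) (y : Fin d → ℂ) :
    (pser a n fun _ => y)
      = ∑ β ∈ Finset.Nat.antidiagonalTuple d n, (∏ k, y k ^ β k) • a β := by
  rw [pser, ContinuousMultilinearMap.sum_apply,
    ← Finset.sum_attach (Finset.Nat.antidiagonalTuple d n) fun β => (∏ k, y k ^ β k) • a β]
  exact Finset.sum_congr rfl fun β _ => P_apply_const a n β.1 _ y

lemma card_antidiagonalTuple_le (n : ℕ) :
    (Finset.Nat.antidiagonalTuple d n).card ≤ (n + 1) ^ d := by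
  have hsub : Finset.Nat.antidiagonalTuple d n ⊆
      Fintype.piFinset fun _ : Fin d => Finset.range (n + 1) := by
    intro β hβ
    rw [Finset.Nat.mem_antidiagonalTuple] at hβ
    refine Fintype.mem_piFinset.mpr fun k => Finset.mem_range.mpr ?_
    have : β k ≤ n := hβ ▸ Finset.single_le_sum (fun i _ => Nat.zero_le _) (Finset.mem_univ k)
    omega
  calc (Finset.Nat.antidiagonalTuple d n).card
      ≤ (Fintype.piFinset fun _ : Fin d => Finset.range (n + 1)).card := Finset.card_le_card hsub
    _ = (n + 1) ^ d := by simp [Fintype.card_piFinset]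

end HolLPS

set_option maxHeartbeats 1000000 in
open HolLPS in
/-- Local power series expansions imply holomorphy. -/
theorem holomorphic_of_local_power_series
    {E : Type*} [NormedAddCommGroup E] [NormedSpace ℂ E] [CompleteSpace E]
    {d : ℕ} {Ω : Set (Fin d → ℂ)} (hΩ : IsOpen Ω)
    {f : (Fin d → ℂ) → E}
    (hf : ∀ z ∈ Ω, ∃ (R : Fin d → ℝ) (a : (Fin d → ℕ) → E),
      (∀ k, 0 < R k) ∧
      (Set.univ.pi fun k => Metric.ball (z k) (R k)) ⊆ Ω ∧
      ∀ w ∈ Set.univ.pi fun k => Metric.ball (z k) (R k),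
        HasSum (fun β : Fin d → ℕ => (∏ k, (w k - z k) ^ β k) • a β) (f w)) :
    ∀ z ∈ Ω, DifferentiableAt ℂ f z := by
  intro z hz
  obtain ⟨R, a, hR, hsub, hsum⟩ := hf z hz
  -- choose a small positive `t` below all radii
  obtain ⟨t, ht0, htR⟩ : ∃ t : ℝ, 0 < t ∧ ∀ k, t < R k := by
    rcases isEmpty_or_nonempty (Fin d) with h | h
    · exact ⟨1, one_pos, fun k => (h.false k).elim⟩
    · have hne : (Finset.univ : Finset (Fin d)).Nonempty := Finset.univ_nonempty
      have hpos : 0 < Finset.univ.inf' hne R := by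
        rw [Finset.lt_inf'_iff]; exact fun k _ => hR k
      refine ⟨Finset.univ.inf' hne R / 2, by linarith, fun k => ?_⟩
      have h1 : Finset.univ.inf' hne R ≤ R k := Finset.inf'_le _ (Finset.mem_univ k)
      linarith
  -- the evaluation point giving the Cauchy bound
  have hw : (fun k => z k + (t : ℂ)) ∈ Set.univ.pi fun k => Metric.ball (z k) (R k) := by
    intro k _
    simp only [Metric.mem_ball, Complex.dist_eq, add_sub_cancel_left]
    rw [Complex.norm_real, Real.norm_eq_abs, abs_of_pos ht0]
    exact htR k
  have hg : HasSum (fun β : Fin d → ℕ => (∏ k, (t : ℂ) ^ β k) • a β)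
      (f fun k => z k + (t : ℂ)) := by
    simpa using hsum _ hw
  -- uniform bound on coefficients (Abel / Cauchy estimates)
  obtain ⟨C0, hC0⟩ : ∃ C0 : ℝ, ∀ β : Fin d → ℕ, ‖a β‖ * t ^ (∑ k, β k) ≤ C0 := by
    obtain ⟨C0, hC0⟩ := (hg.summable.tendsto_cofinite_zero.norm).bddAbove_range_of_cofinite
    refine ⟨C0, fun β => ?_⟩
    have h1 : ‖(∏ k, (t : ℂ) ^ β k) • a β‖ ≤ C0 := hC0 (Set.mem_range_self β)
    have h2 : ‖(∏ k, (t : ℂ) ^ β k) • a β‖ = t ^ (∑ k, β k) * ‖a β‖ := by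
      rw [norm_smul, norm_prod]
      congr 1
      rw [← Finset.prod_pow_eq_pow_sum]
      exact Finset.prod_congr rfl fun k _ => by
        rw [norm_pow, Complex.norm_real, Real.norm_eq_abs, abs_of_pos ht0]
    rw [mul_comm] at h2
    linarith [h1, h2 ▸ h1]
  have hC0nn : 0 ≤ C0 := le_trans (by positivity) (hC0 0)
  -- the bound sequence
  obtain ⟨B, hB⟩ : ∃ B : ℝ, ∀ n : ℕ, ((n : ℝ) + 1) ^ d * (1 / 2 : ℝ) ^ n ≤ B := by
    have h1 : Filter.Tendsto (fun n : ℕ => ((n : ℝ)) ^ d * (1 / 2 : ℝ) ^ n)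
        Filter.atTop (nhds 0) :=
      tendsto_pow_const_mul_const_pow_of_abs_lt_one d (by rw [abs_of_nonneg]; norm_num; norm_num)
    have h2 : Filter.Tendsto (fun n : ℕ => ((n : ℝ) + 1) ^ d * (1 / 2 : ℝ) ^ n)
        Filter.atTop (nhds 0) := by
      have h3 := (h1.comp (Filter.tendsto_add_atTop_nat 1)).const_mul 2
      rw [mul_zero] at h3
      refine h3.congr fun n => ?_
      simp only [Function.comp]
      push_cast
      ring
    obtain ⟨B, hBub⟩ := h2.bddAbove_range
    exact ⟨B, fun n => hBub (Set.mem_range_self n)⟩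
  set rr : ℝ := t / 2 with hrr
  have hrr0 : 0 < rr := by positivity
  -- the norm bound for the series
  have hbound : ∀ n : ℕ, ‖pser a n‖ * rr ^ n ≤ C0 * B := by
    intro n
    have h1 : ‖pser a n‖ ≤ (Finset.Nat.antidiagonalTuple d n).card • (C0 / t ^ n) := by
      refine (pser_norm_le a n).trans (Finset.sum_le_card_nsmul _ _ _ fun β hβ => ?_)
      rw [Finset.Nat.mem_antidiagonalTuple] at hβ
      rw [le_div_iff₀ (by positivity)]
      calc ‖a β‖ * t ^ n = ‖a β‖ * t ^ (∑ k, β k) := by rw [hβ]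
        _ ≤ C0 := hC0 β
    have h2 : ((Finset.Nat.antidiagonalTuple d n).card : ℝ) ≤ ((n : ℝ) + 1) ^ d := by
      calc ((Finset.Nat.antidiagonalTuple d n).card : ℝ) ≤ ((n + 1) ^ d : ℕ) := by
            exact_mod_cast card_antidiagonalTuple_le n
        _ = ((n : ℝ) + 1) ^ d := by push_cast; ring
    calc ‖pser a n‖ * rr ^ n
        ≤ ((Finset.Nat.antidiagonalTuple d n).card * (C0 / t ^ n)) * rr ^ n := by
          rw [nsmul_eq_mul] at h1
          exact mul_le_mul_of_nonneg_right h1 (by positivity)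
      _ ≤ (((n : ℝ) + 1) ^ d * (C0 / t ^ n)) * rr ^ n := by
          have : (0:ℝ) ≤ C0 / t ^ n := by positivity
          exact mul_le_mul_of_nonneg_right (mul_le_mul_of_nonneg_right h2 this) (by positivity)
      _ = C0 * (((n : ℝ) + 1) ^ d * (1 / 2 : ℝ) ^ n) := by
          rw [hrr, div_pow]
          have htn : (0:ℝ) < t ^ n := by positivity
          field_simp
          rw [mul_assoc, ← mul_pow]; norm_num
      _ ≤ C0 * B := by
          exact mul_le_mul_of_nonneg_left (hB n) hC0nn
  -- assemble the power series on ball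
  have hps : HasFPowerSeriesOnBall f (pser a) z (ENNReal.ofReal rr) := by
    refine ⟨?_, by simp [hrr0], ?_⟩
    · rw [show ENNReal.ofReal rr = ((Real.toNNReal rr : NNReal) : ENNReal) from rfl]
      refine FormalMultilinearSeries.le_radius_of_bound _ (C0 * B) fun n => ?_
      rw [Real.coe_toNNReal _ hrr0.le]
      exact hbound n
    · intro y hy
      have hy' : ‖y‖ < rr := by
        rw [EMetric.mem_ball, edist_zero_right, ← ofReal_norm,
          ENNReal.ofReal_lt_ofReal_iff hrr0] at hy
        exact hy
      have hmem : z + y ∈ Set.univ.pi fun k => Metric.ball (z k) (R k) := by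
        intro k _
        simp only [Metric.mem_ball, Pi.add_apply, Complex.dist_eq, add_sub_cancel_left]
        calc ‖y k‖ ≤ ‖y‖ := norm_le_pi_norm y k
          _ < rr := hy'
          _ < t := by rw [hrr]; linarith
          _ < R k := htR k
      have hS : HasSum (fun β : Fin d → ℕ => (∏ k, (y k) ^ β k) • a β) (f (z + y)) := by
        simpa using hsum _ hmem
      -- regroup by total degree
      have hS' : HasSum (fun p : Σ n : ℕ, {β : Fin d → ℕ // ∑ k, β k = n} =>
          (∏ k, (y k) ^ (p.2 : Fin d → ℕ) k) • a p.2) (f (z + y)) :=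
        ((Equiv.sigmaFiberEquiv (fun β : Fin d → ℕ => ∑ k, β k)).hasSum_iff).mpr hS
      refine hS'.sigma fun n => ?_
      rw [pser_apply_const]
      exact ((Equiv.subtypeEquivRight fun β =>
          Finset.Nat.mem_antidiagonalTuple.symm).hasSum_iff).mpr
        ((Finset.Nat.antidiagonalTuple d n).hasSum
          (fun β : Fin d → ℕ => (∏ k, (y k) ^ β k) • a β))
  exact (hps.analyticAt).differentiableAt
end

section
/- Riemann's removable singularities theorem (Corollary after Theorem 7.4): Let E be a complex Banach space, Ω ⊆ ℂ^d open and connected, and A ⊆ Ω a set which is closed in Ω and thin, i.e., for every z ∈ A there are an open polydisc D with z ∈ D ⊆ Ω and a holomorphic function g : D → ℂ, not identically zero on D, with g = 0 on A ∩ D. Let f : Ω \ A → E be holomorphic on Ω \ A and suppose that for every z ∈ Ω there is an open polydisc D with z ∈ D ⊆ Ω such that f is norm-bounded on D \ A. Then there exists a holomorphic function F : Ω → E with F = f on Ω \ A. -/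
open Metric Set Filter Complex Topology Function

set_option linter.unusedSectionVars false
set_option linter.unusedVariables false
set_option synthInstance.maxHeartbeats 1000000
set_option maxHeartbeats 1600000

section Helpers
variable {E : Type*} [NormedAddCommGroup E] [NormedSpace ℂ E] [CompleteSpace E]
variable {G : Type*} [NormedAddCommGroup G] [NormedSpace ℂ G]

lemma slice_hasDerivAt {f : G → E} {x v : G} {t : ℂ}
    (hf : DifferentiableAt ℂ f (x + t • v)) :
    HasDerivAt (fun s : ℂ => f (x + s • v)) (fderiv ℂ f (x + t • v) v) t := by
  have h1 : HasDerivAt (fun s : ℂ => x + s • v) v t :=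
    ((hasDerivAt_id t).smul_const v).const_add x |>.congr_deriv (by simp)
  exact (hf.hasFDerivAt.comp_hasDerivAt t h1)

lemma hasFDerivAt_shift {f : G → E} {c p : G} (h : DifferentiableAt ℂ f (c + p)) :
    HasFDerivAt (fun z => f (c + z)) (fderiv ℂ f (c + p)) p := by
  have := h.hasFDerivAt.comp p ((hasFDerivAt_id p).const_add c)
  simpa [Function.comp_def] using this

/-- Cauchy-type estimate via the Schwarz lemma. -/
lemma norm_fderiv_le_of_ball {f : G → E} {y : G} {ρ M : ℝ} (hρ : 0 < ρ)
    (hd : ∀ z ∈ ball y ρ, DifferentiableAt ℂ f z)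
    (hM : ∀ z ∈ ball y ρ, ‖f z‖ ≤ M) : ‖fderiv ℂ f y‖ ≤ 2 * M / ρ := by
  have hM0 : 0 ≤ M := le_trans (norm_nonneg _) (hM y (mem_ball_self hρ))
  refine le_of_forall_pos_le_add fun η hη => ?_
  refine ContinuousLinearMap.opNorm_le_bound _ (by positivity) fun w => ?_
  rcases eq_or_ne w 0 with rfl | hw
  · simp
  have hw0 : 0 < ‖w‖ := norm_pos_iff.2 hw
  set R : ℝ := ρ / ‖w‖ with hR
  have hR0 : 0 < R := by positivity
  set h : ℂ → E := fun s => f (y + s • w) with hh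
  have hmem : ∀ s : ℂ, s ∈ ball (0:ℂ) R → y + s • w ∈ ball y ρ := by
    intro s hs
    simp only [mem_ball, dist_self_add_left] at hs ⊢
    rw [norm_smul]
    calc ‖s‖ * ‖w‖ < R * ‖w‖ := by
          apply mul_lt_mul_of_pos_right _ hw0
          simpa [dist_eq_norm] using hs
      _ = ρ := by rw [hR, div_mul_cancel₀ _ hw0.ne']
  have hdh : DifferentiableOn ℂ h (ball (0:ℂ) R) := fun s hs =>
    (slice_hasDerivAt (hd _ (hmem s hs))).differentiableAt.differentiableWithinAt
  have hmaps : MapsTo h (ball (0:ℂ) R) (ball (h 0) (2 * M + η * ρ)) := by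
    intro s hs
    simp only [mem_ball, dist_eq_norm]
    calc ‖h s - h 0‖ ≤ ‖h s‖ + ‖h 0‖ := norm_sub_le _ _
      _ ≤ M + M := add_le_add (hM _ (hmem s hs))
          (hM _ (by simp only [hh, zero_smul, add_zero]; exact mem_ball_self hρ))
      _ < 2 * M + η * ρ := by nlinarith
  have hder : deriv h 0 = fderiv ℂ f y w := by
    have hds : HasDerivAt h (fderiv ℂ f (y + (0:ℂ) • w) w) 0 :=
      slice_hasDerivAt (hd _ (by simp only [zero_smul, add_zero]; exact mem_ball_self hρ))
    simpa using hds.deriv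
  have hle := Complex.norm_deriv_le_div_of_mapsTo_ball hdh (hmaps.mono_right ball_subset_closedBall) hR0
  rw [hder] at hle
  calc ‖fderiv ℂ f y w‖ ≤ (2 * M + η * ρ) / R := hle
    _ = (2 * M / ρ + η) * ‖w‖ := by rw [hR]; field_simp

/-- Continuity of the derivative of a holomorphic function. -/
lemma continuousOn_fderiv [ProperSpace G] {f : G → E} {U : Set G} (hU : IsOpen U)
    (hd : ∀ z ∈ U, DifferentiableAt ℂ f z) : ContinuousOn (fderiv ℂ f) U := by
  intro y₀ hy₀
  apply ContinuousAt.continuousWithinAt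
  obtain ⟨ρ₃, hρ₃, hball⟩ := Metric.isOpen_iff.1 hU y₀ hy₀
  set ρ : ℝ := ρ₃ / 3 with hρdef
  have hρ : 0 < ρ := by positivity
  have hsub : ∀ y ∈ closedBall y₀ (2 * ρ), y ∈ U := by
    intro y hy
    apply hball
    simp only [mem_closedBall, mem_ball] at hy ⊢
    linarith
  have hcompact : IsCompact (closedBall y₀ (2 * ρ)) := isCompact_closedBall _ _
  have hcont : ContinuousOn f (closedBall y₀ (2 * ρ)) := fun y hy =>
    ((hd y (hsub y hy)).continuousAt).continuousWithinAt
  have hucont := hcompact.uniformContinuousOn_of_continuous hcont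
  rw [Metric.uniformContinuousOn_iff] at hucont
  rw [Metric.continuousAt_iff]
  intro ε hε
  have hε' : 0 < ε * ρ / 6 := by positivity
  obtain ⟨δ, hδ0, hδ⟩ := hucont _ hε'
  refine ⟨min δ ρ, lt_min hδ0 hρ, fun {y} hy => ?_⟩
  rw [dist_eq_norm] at hy ⊢
  have hyδ : ‖y - y₀‖ < δ := lt_of_lt_of_le hy (min_le_left _ _)
  have hyρ : ‖y - y₀‖ < ρ := lt_of_lt_of_le hy (min_le_right _ _)
  set φ : G → E := fun z => f (y₀ + z) - f (y₀ + (y - y₀) + z) with hφ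
  have hmem1 : ∀ z : G, ‖z‖ < ρ → y₀ + z ∈ closedBall y₀ (2 * ρ) := by
    intro z hz
    simp only [mem_closedBall, dist_self_add_left]
    linarith
  have hmem2 : ∀ z : G, ‖z‖ < ρ → y₀ + (y - y₀) + z ∈ closedBall y₀ (2 * ρ) := by
    intro z hz
    simp only [mem_closedBall]
    have he : dist (y₀ + (y - y₀) + z) y₀ = ‖y - y₀ + z‖ := by
      rw [dist_eq_norm]; congr 1; abel
    rw [he]
    calc ‖y - y₀ + z‖ ≤ ‖y - y₀‖ + ‖z‖ := norm_add_le _ _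
      _ ≤ 2 * ρ := by linarith
  have hφd : ∀ z ∈ ball (0 : G) ρ, DifferentiableAt ℂ φ z := by
    intro z hz
    simp only [mem_ball, dist_zero_right] at hz
    have h1 : y₀ + z ∈ U := hsub _ (hmem1 z hz)
    have h2 : y₀ + (y - y₀) + z ∈ U := hsub _ (hmem2 z hz)
    exact ((hasFDerivAt_shift (hd _ h1)).differentiableAt).sub
      ((hasFDerivAt_shift (hd _ h2)).differentiableAt)
  have hφM : ∀ z ∈ ball (0 : G) ρ, ‖φ z‖ ≤ ε * ρ / 6 := by
    intro z hz
    simp only [mem_ball, dist_zero_right] at hz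
    have hdist : dist (y₀ + z) (y₀ + (y - y₀) + z) < δ := by
      have he : dist (y₀ + z) (y₀ + (y - y₀) + z) = ‖y - y₀‖ := by
        rw [dist_eq_norm]
        have h3 : y₀ + z - (y₀ + (y - y₀) + z) = -(y - y₀) := by abel
        rw [h3, norm_neg]
      rw [he]; exact hyδ
    exact le_of_lt (by
      simpa [hφ, dist_eq_norm] using hδ _ (hmem1 z hz) _ (hmem2 z hz) hdist)
  have hkey : ‖fderiv ℂ φ 0‖ ≤ 2 * (ε * ρ / 6) / ρ := norm_fderiv_le_of_ball hρ hφd hφM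
  have hφ0 : fderiv ℂ φ 0 = fderiv ℂ f y₀ - fderiv ℂ f y := by
    have e1 : HasFDerivAt (fun z : G => f (y₀ + z)) (fderiv ℂ f y₀) 0 := by
      have := hasFDerivAt_shift (p := (0:G)) (c := y₀)
        (by simpa using hd _ (hsub _ (hmem1 0 (by simpa using hρ))))
      simpa using this
    have e2 : HasFDerivAt (fun z : G => f (y₀ + (y - y₀) + z)) (fderiv ℂ f y) 0 := by
      have h2 : DifferentiableAt ℂ f (y₀ + (y - y₀) + 0) :=
        hd _ (hsub _ (hmem2 0 (by simpa using hρ)))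
      have := hasFDerivAt_shift (p := (0:G)) (c := y₀ + (y - y₀)) h2
      have he : y₀ + (y - y₀) + 0 = y := by abel
      rw [he] at this
      exact this
    exact (e1.sub e2).fderiv
  rw [hφ0] at hkey
  have : ‖fderiv ℂ f y - fderiv ℂ f y₀‖ ≤ ε / 3 := by
    rw [← norm_neg]
    simp only [neg_sub]
    calc ‖fderiv ℂ f y₀ - fderiv ℂ f y‖ ≤ 2 * (ε * ρ / 6) / ρ := hkey
      _ = ε / 3 := by field_simp; ring
  calc ‖fderiv ℂ f y - fderiv ℂ f y₀‖ ≤ ε / 3 := this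
    _ < ε := by linarith

/-- 1-D identity theorem helper: differentiable on a disc, eventually zero at center. -/
lemma oneDim_eqOn_zero {q : ℂ → E} {T : ℝ} (hT : 0 < T)
    (hd : DifferentiableOn ℂ q (ball (0:ℂ) T)) (h0 : ∀ᶠ t in 𝓝 (0:ℂ), q t = 0) :
    ∀ t ∈ ball (0:ℂ) T, q t = 0 := by
  have ha : AnalyticOnNhd ℂ q (ball (0:ℂ) T) := hd.analyticOnNhd isOpen_ball
  exact fun t ht => ha.eqOn_zero_of_preconnected_of_eventuallyEq_zero
    (convex_ball _ _).isPreconnected (mem_ball_self hT) h0 ht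

/-- Propagation of vanishing for holomorphic functions on ℂ^d-like spaces. -/
lemma eqOn_zero_of_preconnected {f : G → E} {U : Set G}
    (hU : IsOpen U) (hconn : IsPreconnected U)
    (hd : ∀ z ∈ U, DifferentiableAt ℂ f z) {c : G} (hc : c ∈ U)
    (h0 : ∀ᶠ z in 𝓝 c, f z = 0) : ∀ z ∈ U, f z = 0 := by
  set S : Set G := {x | ∀ᶠ y in 𝓝 x, f y = 0} with hS
  have hSopen : IsOpen S := by
    rw [isOpen_iff_mem_nhds]
    intro x hx
    exact hx.eventually_nhds
  have hsub : U ⊆ S := by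
    apply hconn.subset_of_closure_inter_subset hSopen ⟨c, hc, h0⟩
    intro x ⟨hxcl, hxU⟩
    obtain ⟨r, hr, hball⟩ := Metric.isOpen_iff.1 hU x hxU
    obtain ⟨y, hyS, hyx⟩ := Metric.mem_closure_iff.1 hxcl (r/5) (by positivity)
    -- show f vanishes on ball x (r/5)
    have hz : ∀ z ∈ ball x (r/5), f z = 0 := by
      intro z hz
      have hzy : ‖z - y‖ < 2 * (r/5) := by
        rw [mem_ball, dist_eq_norm] at hz
        rw [dist_eq_norm] at hyx
        calc ‖z - y‖ = ‖(z - x) + (x - y)‖ := by congr 1; abel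
          _ ≤ ‖z - x‖ + ‖x - y‖ := norm_add_le _ _
          _ < 2 * (r/5) := by rw [norm_sub_rev (x) y] at hyx ⊢; linarith [hyx]
      set q : ℂ → E := fun t => f (y + t • (z - y)) with hq
      have hmem : ∀ t : ℂ, t ∈ ball (0:ℂ) 2 → y + t • (z - y) ∈ U := by
        intro t ht
        apply hball
        rw [mem_ball, dist_eq_norm] at ht ⊢
        calc ‖y + t • (z - y) - x‖ = ‖(y - x) + t • (z - y)‖ := by congr 1; abel
          _ ≤ ‖y - x‖ + ‖t‖ * ‖z - y‖ := le_trans (norm_add_le _ _) (by rw [norm_smul])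
          _ < r/5 + 2 * (2 * (r/5)) := by
              have h1 : ‖y - x‖ < r / 5 := by rwa [dist_eq_norm, norm_sub_rev] at hyx
              have h2 : ‖t‖ * ‖z - y‖ ≤ 2 * ‖z - y‖ :=
                mul_le_mul_of_nonneg_right (by simpa using ht.le) (norm_nonneg _)
              nlinarith [norm_nonneg (z - y)]
          _ ≤ r := by linarith
      have hqd : DifferentiableOn ℂ q (ball (0:ℂ) 2) := fun t ht =>
        (slice_hasDerivAt (hd _ (hmem t ht))).differentiableAt.differentiableWithinAt
      have hq0 : ∀ᶠ t in 𝓝 (0:ℂ), q t = 0 := by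
        have hcont : ContinuousAt (fun t : ℂ => y + t • (z - y)) 0 := by fun_prop
        have htend : Tendsto (fun t : ℂ => y + t • (z - y)) (𝓝 0) (𝓝 y) := by
          simpa using hcont.tendsto
        exact htend.eventually hyS
      have := oneDim_eqOn_zero (by norm_num : (0:ℝ) < 2) hqd hq0 1 (by simp)
      simpa [hq] using this
    rw [hS, mem_setOf_eq]
    filter_upwards [Metric.ball_mem_nhds x (by positivity : 0 < r/5)] with z hz'
    exact hz z hz'
  exact fun z hzU => ((hsub hzU).self_of_nhds)

/-- Zeros of a nontrivial holomorphic function in a compact subdisc are finite. -/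
lemma finite_zeros {q : ℂ → ℂ} {T R : ℝ} (hR0 : 0 ≤ R) (hRT : R < T)
    (hd : DifferentiableOn ℂ q (ball (0:ℂ) T)) {t₁ : ℂ} (ht₁ : t₁ ∈ ball (0:ℂ) T)
    (hq1 : q t₁ ≠ 0) : {t ∈ closedBall (0:ℂ) R | q t = 0}.Finite := by
  have hT : 0 < T := lt_of_le_of_lt hR0 hRT
  have ha : AnalyticOnNhd ℂ q (ball (0:ℂ) T) := hd.analyticOnNhd isOpen_ball
  by_contra hinf
  rw [← Set.not_infinite, not_not] at hinf
  obtain ⟨u, hu⟩ := hinf.natEmbedding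
  have humem : ∀ n, (u n : ℂ) ∈ closedBall (0:ℂ) R ∧ q (u n) = 0 := fun n => (u n).2
  obtain ⟨a, ha', φ, hφ, hlim⟩ := (isCompact_closedBall (0:ℂ) R).tendsto_subseq
    (fun n => (humem n).1)
  have haT : a ∈ ball (0:ℂ) T := lt_of_le_of_lt (mem_closedBall.1 ha') hRT
  -- q vanishes frequently near a
  have hfreq : ∃ᶠ t in 𝓝[≠] a, q t = 0 := by
    have hinj : Function.Injective (fun n => ((u (φ n) : ℂ))) :=
      Subtype.coe_injective.comp (hu.comp hφ.injective)
    rw [frequently_iff]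
    intro U hU
    obtain ⟨V, hVopen, haV, hVU⟩ := mem_nhdsWithin.1 hU
    have hev : ∀ᶠ n in atTop, ((u (φ n) : ℂ)) ∈ V := hlim (hVopen.mem_nhds haV)
    obtain ⟨N, hN⟩ := eventually_atTop.1 hev
    have hne : ((u (φ N) : ℂ)) ≠ a ∨ ((u (φ (N+1)) : ℂ)) ≠ a := by
      by_contra hcon
      push_neg at hcon
      exact (by omega : N ≠ N + 1) (hinj (hcon.1.trans hcon.2.symm))
    rcases hne with h | h
    · exact ⟨_, hVU ⟨hN N le_rfl, h⟩, (humem (φ N)).2⟩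
    · exact ⟨_, hVU ⟨hN (N+1) (by omega), h⟩, (humem (φ (N+1))).2⟩
  rcases (ha a haT).eventually_eq_zero_or_eventually_ne_zero with hcase | hcase
  · have := (fun t ht => ha.eqOn_zero_of_preconnected_of_eventuallyEq_zero
      (convex_ball _ _).isPreconnected haT hcase ht : ∀ t ∈ ball (0:ℂ) T, q t = 0)
    exact hq1 (this t₁ ht₁)
  · exact (hfreq.and_eventually hcase).exists.elim (fun t ⟨h1, h2⟩ => h2 h1)

/-- Extension of a bounded holomorphic function over a finite set. -/
lemma extend_over_finite (S : Finset ℂ) :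
    ∀ (U : Set ℂ), IsOpen U → ∀ (h : ℂ → E) (M : ℝ),
    (∀ z ∈ U \ (S : Set ℂ), DifferentiableAt ℂ h z) →
    (∀ z ∈ U \ (S : Set ℂ), ‖h z‖ ≤ M) →
    ∃ H : ℂ → E, (∀ z ∈ U, DifferentiableAt ℂ H z) ∧
      (∀ z ∈ U \ (S : Set ℂ), H z = h z) ∧ (∀ z ∈ U, ‖H z‖ ≤ M) := by
  induction S using Finset.induction_on with
  | empty =>
    intro U hU h M hd hM
    exact ⟨h, fun z hz => hd z (by simpa using hz), fun z hz => rfl,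
      fun z hz => hM z (by simpa using hz)⟩
  | @insert c S' hc IH =>
    intro U hU h M hd hM
    have hU' : IsOpen (U \ {c}) := hU.sdiff isClosed_singleton
    have hset : (U \ {c}) \ (S' : Set ℂ) = U \ ((insert c S' : Finset ℂ) : Set ℂ) := by
      ext z; simp [and_comm, and_assoc]; tauto
    obtain ⟨H', hH'd, hH'eq, hH'M⟩ := IH (U \ {c}) hU' h M
      (fun z hz => hd z (hset ▸ hz)) (fun z hz => hM z (hset ▸ hz))
    by_cases hcU : c ∈ U
    · obtain ⟨R, hR0, hball⟩ := Metric.isOpen_iff.1 hU c hcU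
      have hbsub : ball c R \ {c} ⊆ U \ {c} := fun z hz => ⟨hball hz.1, hz.2⟩
      have hdball : DifferentiableOn ℂ H' (ball c R \ {c}) := fun z hz =>
        (hH'd z (hbsub hz)).differentiableWithinAt
      have hbdd : BddAbove (norm ∘ H' '' (ball c R \ {c})) := by
        refine ⟨M, ?_⟩
        rintro - ⟨z, hz, rfl⟩
        exact hH'M z (hbsub hz)
      set H : ℂ → E := update H' c (limUnder (𝓝[≠] c) H') with hH
      have hdiffball : DifferentiableOn ℂ H (ball c R) :=
        Complex.differentiableOn_update_limUnder_of_bddAbove (ball_mem_nhds c hR0) hdball hbdd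
      have hHeqH' : ∀ z : ℂ, z ≠ c → H z = H' z := fun z hz => update_of_ne hz _ _
      have hdiff : ∀ z ∈ U, DifferentiableAt ℂ H z := by
        intro z hz
        rcases eq_or_ne z c with rfl | hne
        · exact hdiffball.differentiableAt (ball_mem_nhds _ hR0)
        · refine (hH'd z ⟨hz, hne⟩).congr_of_eventuallyEq ?_
          filter_upwards [compl_singleton_mem_nhds hne] with w hw
          exact hHeqH' w hw
      have htends : Tendsto H' (𝓝[≠] c) (𝓝 (H c)) := by
        have hcont : ContinuousAt H c := (hdiff c hcU).continuousAt
        have : Tendsto H (𝓝[≠] c) (𝓝 (H c)) := hcont.continuousWithinAt.tendsto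
        refine this.congr' ?_
        filter_upwards [self_mem_nhdsWithin] with w hw
        exact hHeqH' w hw
      refine ⟨H, hdiff, ?_, ?_⟩
      · intro z hz
        have hzc : z ≠ c := by
          intro hzc; subst hzc; exact hz.2 (by simp)
        rw [hHeqH' z hzc]
        exact hH'eq z ⟨⟨hz.1, hzc⟩, fun hmem => hz.2 (by simp [hmem])⟩
      · intro z hz
        rcases eq_or_ne z c with rfl | hne
        · refine le_of_tendsto (htends.norm) ?_
          filter_upwards [mem_nhdsWithin_of_mem_nhds (ball_mem_nhds _ hR0),
            self_mem_nhdsWithin] with w hw hw'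
          exact hH'M w ⟨hball hw, hw'⟩
        · rw [hHeqH' z hne]; exact hH'M z ⟨hz, hne⟩
    · refine ⟨H', fun z hz => hH'd z ⟨hz, fun he => hcU (he ▸ hz)⟩, ?_, ?_⟩
      · intro z hz
        refine hH'eq z ⟨⟨hz.1, fun he => hcU (he ▸ hz.1)⟩, fun hmem => hz.2 (by simp [hmem])⟩
      · exact fun z hz => hH'M z ⟨hz, fun he => hcU (he ▸ hz)⟩

lemma hasFDerivAt_shift' {f : G → E} {c p : G} (h : DifferentiableAt ℂ f (p + c)) :
    HasFDerivAt (fun z => f (z + c)) (fderiv ℂ f (p + c)) p := by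
  have := h.hasFDerivAt.comp p ((hasFDerivAt_id p).add_const c)
  simpa [Function.comp_def] using this


set_option maxHeartbeats 1000000 in
/-- Differentiability of the Cauchy-type parameter integral. -/
lemma diff_param_integral [ProperSpace G] {f : G → E} {v : G} {r ρ M : ℝ} {W : Set G}
    (hr0 : 0 < r) (hρ0 : 0 < ρ) (hWopen : IsOpen W)
    (hWf : ∀ y ∈ W, DifferentiableAt ℂ f y) (hWM : ∀ y ∈ W, ‖f y‖ ≤ M)
    {x₀ : G} {ε' : ℝ} (hε'0 : 0 < ε')
    (hxW : ∀ x ∈ ball x₀ ε', ∀ θ : ℝ, x + circleMap 0 r θ • v ∈ W)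
    (hballW : ∀ x ∈ ball x₀ ε', ∀ θ : ℝ, ball (x + circleMap 0 r θ • v) ρ ⊆ W) :
    DifferentiableAt ℂ (fun x : G => (2 * ↑Real.pi * I)⁻¹ • ∫ θ in (0:ℝ)..(2*Real.pi),
      deriv (circleMap 0 r) θ • ((circleMap 0 r θ - 0)⁻¹ • f (x + circleMap 0 r θ • v))) x₀ := by
  have hγ : ∀ θ : ℝ, ‖circleMap 0 r θ‖ = r := by
    intro θ
    rw [norm_circleMap_zero]
    exact abs_of_pos hr0
  have hγ0 : ∀ θ : ℝ, circleMap 0 r θ ≠ 0 := fun θ =>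
    norm_pos_iff.1 (by rw [hγ]; exact hr0)
  have hmapc : Continuous (fun θ : ℝ => circleMap 0 r θ) := continuous_circleMap 0 r
  have hc1 : Continuous (fun θ : ℝ => deriv (circleMap 0 r) θ) := by
    simp only [deriv_circleMap]
    exact (continuous_circleMap 0 r).mul continuous_const
  have hc2 : Continuous (fun θ : ℝ => (circleMap 0 r θ - 0)⁻¹) := by
    refine (hmapc.sub continuous_const).inv₀ fun θ => ?_
    simpa using hγ0 θ
  have hctr : ∀ x : G, Continuous (fun θ : ℝ => x + circleMap 0 r θ • v) :=
    fun x => continuous_const.add (hmapc.smul continuous_const)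
  have hfWc : ContinuousOn f W := fun y hy => (hWf y hy).continuousAt.continuousWithinAt
  have hcf : ∀ x : G, x ∈ ball x₀ ε' → Continuous (fun θ : ℝ => f (x + circleMap 0 r θ • v)) :=
    fun x hx => hfWc.comp_continuous (hctr x) (fun θ => hxW x hx θ)
  haveI : SecondCountableTopologyEither ℝ (G →L[ℂ] E) :=
    secondCountableTopologyEither_of_left ℝ _
  haveI : SecondCountableTopologyEither ℝ E :=
    secondCountableTopologyEither_of_left ℝ _
  have hFmeas : ∀ᶠ x in 𝓝 x₀, MeasureTheory.AEStronglyMeasurable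
      (fun θ : ℝ => deriv (circleMap 0 r) θ •
        ((circleMap 0 r θ - 0)⁻¹ • f (x + circleMap 0 r θ • v)))
      (MeasureTheory.volume.restrict (Set.uIoc (0:ℝ) (2*Real.pi))) := by
    filter_upwards [isOpen_ball.mem_nhds (mem_ball_self hε'0)] with x hx
    exact (hc1.smul (hc2.smul (hcf x hx))).aestronglyMeasurable
  have hfc : ContinuousOn (fderiv ℂ f) W := continuousOn_fderiv hWopen hWf
  have hF'cont : Continuous (fun θ : ℝ => deriv (circleMap 0 r) θ •
      ((circleMap 0 r θ - 0)⁻¹ • fderiv ℂ f (x₀ + circleMap 0 r θ • v))) := by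
    refine hc1.smul (hc2.smul ?_)
    exact hfc.comp_continuous (hctr x₀) (fun θ => hxW x₀ (mem_ball_self hε'0) θ)
  have key := intervalIntegral.hasFDerivAt_integral_of_dominated_of_fderiv_le
    (𝕜 := ℂ) (μ := MeasureTheory.volume) (a := (0:ℝ)) (b := 2*Real.pi)
    (bound := fun _ => r * (r⁻¹ * (2 * M / ρ)))
    (F := fun (x : G) (θ : ℝ) => deriv (circleMap 0 r) θ •
      ((circleMap 0 r θ - 0)⁻¹ • f (x + circleMap 0 r θ • v)))
    (F' := fun (x : G) (θ : ℝ) => deriv (circleMap 0 r) θ •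
      ((circleMap 0 r θ - 0)⁻¹ • fderiv ℂ f (x + circleMap 0 r θ • v)))
    (x₀ := x₀) (ball_mem_nhds x₀ hε'0) hFmeas
    ((hc1.smul (hc2.smul (hcf x₀ (mem_ball_self hε'0)))).intervalIntegrable _ _)
    hF'cont.aestronglyMeasurable ?_ (intervalIntegrable_const) ?_
  · have hdint : DifferentiableAt ℂ (fun x : G => ∫ θ in (0:ℝ)..(2*Real.pi),
        deriv (circleMap 0 r) θ • ((circleMap 0 r θ - 0)⁻¹ • f (x + circleMap 0 r θ • v))) x₀ :=
      key.differentiableAt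
    exact hdint.const_smul _
  · -- the bound
    refine Filter.Eventually.of_forall fun θ _ x hx => ?_
    have hfb : ‖fderiv ℂ f (x + circleMap 0 r θ • v)‖ ≤ 2 * M / ρ := by
      refine norm_fderiv_le_of_ball hρ0 ?_ ?_
      · intro z hz
        exact hWf z (hballW x hx θ hz)
      · intro z hz
        exact hWM z (hballW x hx θ hz)
    show ‖deriv (circleMap 0 r) θ •
      ((circleMap 0 r θ - 0)⁻¹ • fderiv ℂ f (x + circleMap 0 r θ • v))‖ ≤ r * (r⁻¹ * (2 * M / ρ))
    have h1 : ‖deriv (circleMap 0 r) θ‖ = r := by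
      rw [deriv_circleMap, norm_mul]
      simp [hγ θ]
    have h2 : ‖(circleMap 0 r θ - 0)⁻¹‖ = r⁻¹ := by
      rw [sub_zero, norm_inv, hγ θ]
    have hrinv : (0:ℝ) ≤ r⁻¹ := by positivity
    calc ‖deriv (circleMap 0 r) θ •
        ((circleMap 0 r θ - 0)⁻¹ • fderiv ℂ f (x + circleMap 0 r θ • v))‖
        ≤ ‖deriv (circleMap 0 r) θ‖ *
          ‖(circleMap 0 r θ - 0)⁻¹ • fderiv ℂ f (x + circleMap 0 r θ • v)‖ := ContinuousLinearMap.opNorm_smul_le _ _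
      _ ≤ ‖deriv (circleMap 0 r) θ‖ * (‖(circleMap 0 r θ - 0)⁻¹‖ *
          ‖fderiv ℂ f (x + circleMap 0 r θ • v)‖) :=
          mul_le_mul_of_nonneg_left (ContinuousLinearMap.opNorm_smul_le _ _) (norm_nonneg _)
      _ ≤ r * (r⁻¹ * (2 * M / ρ)) := by
          rw [h1, h2]
          exact mul_le_mul_of_nonneg_left
            (mul_le_mul_of_nonneg_left hfb hrinv) hr0.le
  · -- differentiability of the integrand
    refine Filter.Eventually.of_forall fun θ _ x hx => ?_
    have hdx : DifferentiableAt ℂ f (x + circleMap 0 r θ • v) := hWf _ (hxW x hx θ)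
    exact ((hasFDerivAt_shift' (c := circleMap 0 r θ • v) hdx).const_smul
      ((circleMap 0 r θ - 0)⁻¹ : ℂ)).const_smul (deriv (circleMap 0 r) θ)

set_option maxHeartbeats 1000000 in
/-- The key local extension lemma near a point of `A`. -/
lemma local_extension [ProperSpace G] {f : G → E} {A : Set G} {a : G} {ε : ℝ} (hε : 0 < ε)
    (hfd : ∀ z ∈ ball a (3*ε) \ A, DifferentiableAt ℂ f z)
    {M : ℝ} (hM : ∀ z ∈ ball a (3*ε) \ A, ‖f z‖ ≤ M)
    {g : G → ℂ} (hgd : ∀ z ∈ ball a (3*ε), DifferentiableAt ℂ g z)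
    (hgA : ∀ z ∈ ball a (3*ε), z ∈ A → g z = 0)
    {b : G} (hb : b ∈ ball a ε) (hbne : b ≠ a) (hgb : g b ≠ 0) :
    ∃ δ : ℝ, 0 < δ ∧ δ ≤ ε ∧ ∃ F : G → E,
      (∀ z ∈ ball a δ, DifferentiableAt ℂ F z) ∧ ∀ z ∈ ball a δ \ A, F z = f z := by
  set v : G := b - a with hv
  have hvnorm : ‖v‖ < ε := by rw [hv, ← dist_eq_norm]; exact mem_ball.1 hb
  have hv0 : v ≠ 0 := sub_ne_zero.2 hbne
  -- slice membership
  have hmem3 : ∀ x : G, dist x a ≤ ε → ∀ t : ℂ, ‖t‖ ≤ 2 → x + t • v ∈ ball a (3*ε) := by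
    intro x hx t ht
    rw [mem_ball]
    calc dist (x + t • v) a ≤ dist (x + t • v) x + dist x a := dist_triangle _ _ _
      _ = ‖t • v‖ + dist x a := by rw [dist_self_add_left]
      _ ≤ 2 * ‖v‖ + ε := by
          rw [norm_smul]
          exact add_le_add (mul_le_mul_of_nonneg_right ht (norm_nonneg _)) hx
      _ < 3 * ε := by linarith
  have hq0d : DifferentiableOn ℂ (fun t : ℂ => g (a + t • v)) (ball (0:ℂ) 2) := by
    intro t ht
    exact (slice_hasDerivAt (hgd _ (hmem3 a (by simp [hε.le]) t
      (mem_ball_zero_iff.1 ht).le))).differentiableAt.differentiableWithinAt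
  have hq01 : (fun t : ℂ => g (a + t • v)) 1 ≠ 0 := by
    simpa [hv] using hgb
  -- finite zeros on closedBall 0 (7/4)
  have hZfin : {t ∈ closedBall (0:ℂ) (7/4) | g (a + t • v) = 0}.Finite :=
    finite_zeros (by norm_num) (by norm_num) hq0d
      (mem_ball_zero_iff.2 (by norm_num)) hq01
  -- choose a good radius r
  obtain ⟨r, hrIoo, hrnot⟩ : ∃ r ∈ Ioo (0:ℝ) (3/2),
      r ∉ (fun t : ℂ => ‖t‖) '' {t ∈ closedBall (0:ℂ) (7/4) | g (a + t • v) = 0} := by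
    have hinf : (Ioo (0:ℝ) (3/2)).Infinite := Set.Ioo_infinite (by norm_num)
    obtain ⟨r, hr⟩ := (hinf.diff (hZfin.image _)).nonempty
    exact ⟨r, hr.1, hr.2⟩
  obtain ⟨hr0, hr32⟩ := hrIoo
  have hcirc_ne : ∀ t : ℂ, ‖t‖ = r → g (a + t • v) ≠ 0 := by
    intro t ht hgt
    refine hrnot ⟨t, ⟨?_, hgt⟩, ht⟩
    rw [mem_closedBall_zero_iff, ht]
    linarith
  -- the good open set W
  set W : Set G := {y | y ∈ ball a (3*ε) ∧ g y ≠ 0} with hW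
  have hWopen : IsOpen W := by
    rw [isOpen_iff_mem_nhds]
    rintro y ⟨hy1, hy2⟩
    have hc : ContinuousAt g y := (hgd y hy1).continuousAt
    filter_upwards [isOpen_ball.mem_nhds hy1, hc.eventually_ne hy2] with z h1 h2
    exact ⟨h1, h2⟩
  have hWA : ∀ y ∈ W, y ∉ A := fun y hy hyA => hy.2 (hgA y hy.1 hyA)
  have hWball : W ⊆ ball a (3*ε) := fun y hy => hy.1
  -- tube over a
  have hTubeA : ((fun t : ℂ => a + t • v) '' sphere 0 r) ⊆ W := by
    rintro - ⟨t, ht, rfl⟩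
    have htr : ‖t‖ = r := mem_sphere_zero_iff_norm.1 ht
    exact ⟨hmem3 a (by simp [hε.le]) t (by rw [htr]; linarith), hcirc_ne t htr⟩
  have hTubeAcp : IsCompact ((fun t : ℂ => a + t • v) '' sphere 0 r) :=
    (isCompact_sphere _ _).image (by fun_prop)
  obtain ⟨δ₁, hδ₁0, hδ₁⟩ := hTubeAcp.exists_thickening_subset_open hWopen hTubeA
  set δ : ℝ := min (δ₁/2) ε with hδdef
  have hδ0 : 0 < δ := lt_min (by linarith) hε
  have hδε : δ ≤ ε := min_le_right _ _
  have htube : ∀ x : G, dist x a ≤ δ → ∀ t : ℂ, ‖t‖ = r → x + t • v ∈ W := by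
    intro x hx t ht
    apply hδ₁
    rw [mem_thickening_iff]
    refine ⟨a + t • v, ⟨t, mem_sphere_zero_iff_norm.2 ht, rfl⟩, ?_⟩
    rw [dist_add_right]
    calc dist x a ≤ δ := hx
      _ < δ₁ := lt_of_le_of_lt (min_le_left _ _) (by linarith)
  -- the full tube and its thickening
  set Tube : Set G := (fun p : G × ℂ => p.1 + p.2 • v) '' (closedBall a δ ×ˢ sphere 0 r) with hTube
  have hTubecp : IsCompact Tube :=
    ((isCompact_closedBall _ _).prod (isCompact_sphere _ _)).image (by fun_prop)
  have hTubeW : Tube ⊆ W := by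
    rintro - ⟨⟨x, t⟩, ⟨hx, ht⟩, rfl⟩
    exact htube x (mem_closedBall.1 hx) t (mem_sphere_zero_iff_norm.1 ht)
  obtain ⟨ρ, hρ0, hρ⟩ := hTubecp.exists_thickening_subset_open hWopen hTubeW
  have hballW : ∀ y ∈ Tube, ∀ z ∈ ball y ρ, z ∈ W := by
    intro y hy z hz
    exact hρ (mem_thickening_iff.2 ⟨y, hy, mem_ball.1 hz⟩)
  refine ⟨δ, hδ0, hδε, fun x =>
    (2 * ↑Real.pi * I)⁻¹ • ∫ θ in (0:ℝ)..(2*Real.pi),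
      deriv (circleMap 0 r) θ • ((circleMap 0 r θ - 0)⁻¹ • f (x + circleMap 0 r θ • v)), ?_, ?_⟩
  · -- differentiability
    intro x₀ hx₀
    set ε' : ℝ := δ - dist x₀ a with hε'def
    have hε'0 : 0 < ε' := by
      rw [hε'def]; have := mem_ball.1 hx₀; linarith
    have hWf : ∀ y ∈ W, DifferentiableAt ℂ f y := fun y hy =>
      hfd y ⟨hWball hy, hWA y hy⟩
    have hWM : ∀ y ∈ W, ‖f y‖ ≤ M := fun y hy => hM y ⟨hWball hy, hWA y hy⟩
    have hxT : ∀ x : G, x ∈ ball x₀ ε' → ∀ θ : ℝ, x + circleMap 0 r θ • v ∈ Tube := by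
      intro x hx θ
      refine ⟨(x, circleMap 0 r θ), ⟨?_, circleMap_mem_sphere 0 hr0.le θ⟩, rfl⟩
      rw [mem_closedBall]
      calc dist x a ≤ dist x x₀ + dist x₀ a := dist_triangle _ _ _
        _ ≤ ε' + dist x₀ a := by
            have := mem_ball.1 hx; linarith
        _ = δ := by rw [hε'def]; ring
    exact diff_param_integral hr0 hρ0 hWopen hWf hWM hε'0
      (fun x hx θ => hTubeW (hxT x hx θ))
      (fun x hx θ z hz => hballW _ (hxT x hx θ) z hz)
  · -- equality with f off A
    rintro x ⟨hxball, hxA⟩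
    have hxa : dist x a ≤ δ := (mem_ball.1 hxball).le
    have hxε : dist x a ≤ ε := le_trans hxa hδε
    have hrr : ‖((r:ℝ):ℂ)‖ = r := by
      rw [Complex.norm_real]; exact abs_of_pos hr0
    have hqxd : DifferentiableOn ℂ (fun t : ℂ => g (x + t • v)) (ball (0:ℂ) 2) := by
      intro t ht
      exact (slice_hasDerivAt (hgd _ (hmem3 x hxε t
        (mem_ball_zero_iff.1 ht).le))).differentiableAt.differentiableWithinAt
    have hqx_r : g (x + ((r:ℝ):ℂ) • v) ≠ 0 := (htube x hxa _ hrr).2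
    have hZxfin : {t ∈ closedBall (0:ℂ) (8/5) | g (x + t • v) = 0}.Finite :=
      finite_zeros (by norm_num) (by norm_num) hqxd
        (mem_ball_zero_iff.2 (by rw [hrr]; linarith)) hqx_r
    set S : Set ℂ := {t ∈ closedBall (0:ℂ) (8/5) | x + t • v ∈ A} with hSdef
    have hSfin : S.Finite := hZxfin.subset (fun t ht => ⟨ht.1, hgA _
      (hmem3 x hxε t (le_trans (mem_closedBall_zero_iff.1 ht.1) (by norm_num))) ht.2⟩)
    have hgood : ∀ t : ℂ, t ∈ ball (0:ℂ) (8/5) \ (hSfin.toFinset : Set ℂ) →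
        x + t • v ∈ ball a (3*ε) \ A := by
      intro t ht
      rw [mem_diff, hSfin.coe_toFinset] at ht
      have h2 : ‖t‖ < 8/5 := mem_ball_zero_iff.1 ht.1
      have hmem : x + t • v ∈ ball a (3*ε) := hmem3 x hxε t (by linarith)
      exact ⟨hmem, fun hA => ht.2 ⟨mem_closedBall_zero_iff.2 h2.le, hA⟩⟩
    obtain ⟨H, hHd, hHeq, hHM⟩ := extend_over_finite hSfin.toFinset (ball (0:ℂ) (8/5))
      isOpen_ball (fun t => f (x + t • v)) M
      (fun t ht => (slice_hasDerivAt (hfd _ (hgood t ht))).differentiableAt)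
      (fun t ht => hM _ (hgood t ht))
    have hdiffcl : DifferentiableOn ℂ H (closure (ball (0:ℂ) r)) := by
      rw [closure_ball _ hr0.ne']
      intro t ht
      have : ‖t‖ < 8/5 := lt_of_le_of_lt (mem_closedBall_zero_iff.1 ht) (by linarith)
      exact (hHd t (mem_ball_zero_iff.2 this)).differentiableWithinAt
    have hdc : DiffContOnCl ℂ H (ball (0:ℂ) r) := hdiffcl.diffContOnCl
    have hcauchy := hdc.two_pi_i_inv_smul_circleIntegral_sub_inv_smul (mem_ball_self hr0)
    have hsphere : EqOn (fun z : ℂ => (z - 0)⁻¹ • f (x + z • v))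
        (fun z : ℂ => (z - 0)⁻¹ • H z) (sphere (0:ℂ) r) := by
      intro z hz
      have hzr : ‖z‖ = r := mem_sphere_zero_iff_norm.1 hz
      have hnA : x + z • v ∉ A := hWA _ (htube x hxa z hzr)
      have hzS : z ∉ S := fun hS => hnA hS.2
      have : H z = f (x + z • v) := hHeq z ⟨mem_ball_zero_iff.2 (by rw [hzr]; linarith),
        by rw [hSfin.coe_toFinset]; exact hzS⟩
      simp only [this]
    have hinteq : (∮ z in C(0, r), (z - 0)⁻¹ • f (x + z • v))
        = ∮ z in C(0, r), (z - 0)⁻¹ • H z := circleIntegral.integral_congr hr0.le hsphere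
    have hH0 : H 0 = f x := by
      have h0S : (0:ℂ) ∉ S := fun hS => hxA (by simpa using hS.2)
      have := hHeq 0 ⟨mem_ball_zero_iff.2 (by norm_num),
        by rw [hSfin.coe_toFinset]; exact h0S⟩
      simpa using this
    have hgoal : (2 * ↑Real.pi * I)⁻¹ • (∮ z in C(0, r), (z - 0)⁻¹ • f (x + z • v)) = f x := by
      rw [hinteq, hcauchy, hH0]
    simpa [circleIntegral] using hgoal

end Helpers

/-- `D` is an open polydisc in `ℂ^d`. -/
def IsOpenPolydisc {d : ℕ} (D : Set (Fin d → ℂ)) : Prop :=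
  ∃ (w : Fin d → ℂ) (ρ : Fin d → ℝ), (∀ k, 0 < ρ k) ∧
    D = Set.univ.pi fun k => Metric.ball (w k) (ρ k)

lemma IsOpenPolydisc.isOpen {d : ℕ} {D : Set (Fin d → ℂ)} (h : IsOpenPolydisc D) :
    IsOpen D := by
  obtain ⟨w, ρ, hρ, rfl⟩ := h
  exact isOpen_set_pi finite_univ fun k _ => isOpen_ball

lemma IsOpenPolydisc.convex {d : ℕ} {D : Set (Fin d → ℂ)} (h : IsOpenPolydisc D) :
    Convex ℝ D := by
  obtain ⟨w, ρ, hρ, rfl⟩ := h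
  exact convex_pi fun k _ => convex_ball _ _

/-- Riemann's removable singularities theorem: a holomorphic function on the
complement of a thin, relatively closed subset `A` of a connected open set `Ω`,
which is locally bounded near every point of `Ω`, extends holomorphically to `Ω`. -/
theorem riemann_removable_singularities
    {E : Type*} [NormedAddCommGroup E] [NormedSpace ℂ E] [CompleteSpace E]
    {d : ℕ} {Ω : Set (Fin d → ℂ)} (hΩ : IsOpen Ω) (hΩconn : IsConnected Ω)
    {A : Set (Fin d → ℂ)} (hAΩ : A ⊆ Ω) (hAclosed : Ω ∩ closure A ⊆ A)
    (hthin : ∀ z ∈ A, ∃ D : Set (Fin d → ℂ), IsOpenPolydisc D ∧ z ∈ D ∧ D ⊆ Ω ∧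
      ∃ g : (Fin d → ℂ) → ℂ, (∀ x ∈ D, DifferentiableAt ℂ g x) ∧
        ¬ (∀ x ∈ D, g x = 0) ∧ ∀ x ∈ A ∩ D, g x = 0)
    {f : (Fin d → ℂ) → E} (hf : ∀ z ∈ Ω \ A, DifferentiableAt ℂ f z)
    (hbdd : ∀ z ∈ Ω, ∃ D : Set (Fin d → ℂ), IsOpenPolydisc D ∧ z ∈ D ∧ D ⊆ Ω ∧
      Bornology.IsBounded (f '' (D \ A))) :
    ∃ F : (Fin d → ℂ) → E, (∀ z ∈ Ω, DifferentiableAt ℂ F z) ∧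
      ∀ z ∈ Ω \ A, F z = f z := by
  classical
  -- Ω \ A is open
  have hΩA : Ω \ A = Ω \ closure A := by
    ext z
    constructor
    · rintro ⟨hz1, hz2⟩
      exact ⟨hz1, fun hcl => hz2 (hAclosed ⟨hz1, hcl⟩)⟩
    · rintro ⟨hz1, hz2⟩
      exact ⟨hz1, fun hA => hz2 (subset_closure hA)⟩
  have hopenΩA : IsOpen (Ω \ A) := by
    rw [hΩA]
    exact hΩ.sdiff isClosed_closure
  -- density of the complement of A
  have hdense : ∀ U : Set (Fin d → ℂ), IsOpen U → U ⊆ Ω → ∀ w ∈ U,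
      w ∈ closure (U \ A) := by
    intro U hUopen hUΩ w hw
    by_contra hwcl
    -- there is an open neighborhood of w inside A
    obtain ⟨η, hη0, hη⟩ := Metric.isOpen_iff.1 (isOpen_compl_iff.2 isClosed_closure) w
      (by simpa using hwcl)
    have hsub : ∀ y ∈ ball w η ∩ U, y ∈ A := by
      intro y hy
      by_contra hyA
      exact (hη hy.1) (subset_closure ⟨hy.2, hyA⟩)
    have hwA : w ∈ A := hsub w ⟨mem_ball_self hη0, hw⟩
    obtain ⟨D, hDpoly, hwD, hDΩ, g, hgd, hgne, hgz⟩ := hthin w hwA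
    have hg0 : ∀ᶠ z in 𝓝 w, g z = 0 := by
      filter_upwards [isOpen_ball.mem_nhds (mem_ball_self hη0),
        hUopen.mem_nhds hw, hDpoly.isOpen.mem_nhds hwD] with z h1 h2 h3
      exact hgz z ⟨hsub z ⟨h1, h2⟩, h3⟩
    exact hgne (eqOn_zero_of_preconnected hDpoly.isOpen hDpoly.convex.isPreconnected
      hgd hwD hg0)
  -- local extension property
  have hP : ∀ z, ∃ (U : Set (Fin d → ℂ)) (F : (Fin d → ℂ) → E), z ∈ Ω →
      IsOpen U ∧ z ∈ U ∧ U ⊆ Ω ∧ (∀ y ∈ U, DifferentiableAt ℂ F y) ∧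
        (∀ y ∈ U \ A, F y = f y) := by
    intro z
    by_cases hzΩ : z ∈ Ω
    · by_cases hzA : z ∈ A
      · -- the hard case
        obtain ⟨D, hDpoly, hzD, hDΩ, g, hgd, hgne, hgz⟩ := hthin z hzA
        obtain ⟨D', hD'poly, hzD', hD'Ω, hD'bdd⟩ := hbdd z hzΩ
        obtain ⟨ε₀, hε₀0, hε₀⟩ := Metric.isOpen_iff.1 (hDpoly.isOpen.inter hD'poly.isOpen)
          z ⟨hzD, hzD'⟩
        set ε : ℝ := ε₀ / 3 with hεdef
        have hε : 0 < ε := by positivity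
        have hball3 : ball z (3 * ε) ⊆ D ∩ D' := by
          intro y hy
          apply hε₀
          rw [mem_ball] at hy ⊢
          rw [hεdef] at hy
          linarith
        have hballΩ : ball z (3 * ε) ⊆ Ω := fun y hy => hDΩ (hball3 hy).1
        obtain ⟨M, hM⟩ := (isBounded_iff_forall_norm_le).1 hD'bdd
        -- get a point b near z with g b ≠ 0
        have hgz0 : g z = 0 := hgz z ⟨hzA, hzD⟩
        have hb : ∃ b ∈ ball z ε, g b ≠ 0 := by
          by_contra hcon
          push_neg at hcon
          have hg0 : ∀ᶠ y in 𝓝 z, g y = 0 := by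
            filter_upwards [isOpen_ball.mem_nhds (mem_ball_self hε)] with y hy
            exact hcon y hy
          exact hgne (eqOn_zero_of_preconnected hDpoly.isOpen
            hDpoly.convex.isPreconnected hgd hzD hg0)
        obtain ⟨b, hbmem, hbg⟩ := hb
        have hbne : b ≠ z := fun h => hbg (h ▸ hgz0)
        obtain ⟨δ, hδ0, hδε, F, hFd, hFeq⟩ := local_extension hε
          (fun y hy => hf y ⟨hballΩ hy.1, hy.2⟩)
          (M := M) (fun y hy => hM _ ⟨y, ⟨(hball3 hy.1).2, hy.2⟩, rfl⟩)
          (fun y hy => hgd y (hball3 hy).1)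
          (fun y hy hyA => hgz y ⟨hyA, (hball3 hy).1⟩)
          hbmem hbne hbg
        exact ⟨ball z δ, F, fun _ => ⟨isOpen_ball, mem_ball_self hδ0,
          fun y hy => hballΩ (lt_of_lt_of_le (mem_ball.1 hy)
            (by rw [hεdef] at hδε ⊢; linarith) : y ∈ ball z (3*ε)),
          hFd, hFeq⟩⟩
      · exact ⟨Ω \ A, f, fun _ => ⟨hopenΩA, ⟨hzΩ, hzA⟩, diff_subset,
          fun y hy => hf y hy, fun y hy => rfl⟩⟩
    · exact ⟨∅, 0, fun h => absurd h hzΩ⟩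
  choose U F hUF using hP
  -- agreement of local extensions
  have hagree : ∀ z w y, z ∈ Ω → w ∈ Ω → y ∈ U z → y ∈ U w → F z y = F w y := by
    intro z w y hz hw hyz hyw
    obtain ⟨hUz, hzUz, hUzΩ, hFzd, hFzeq⟩ := hUF z hz
    obtain ⟨hUw, hwUw, hUwΩ, hFwd, hFweq⟩ := hUF w hw
    set V : Set (Fin d → ℂ) := U z ∩ U w with hV
    have hVopen : IsOpen V := hUz.inter hUw
    have hyV : y ∈ V := ⟨hyz, hyw⟩
    have hycl : y ∈ closure (V \ A) := hdense V hVopen (fun p hp => hUzΩ hp.1) y hyV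
    haveI : (𝓝[V \ A] y).NeBot := mem_closure_iff_nhdsWithin_neBot.1 hycl
    have t1 : Tendsto (F z) (𝓝[V \ A] y) (𝓝 (F z y)) :=
      ((hFzd y hyz).continuousAt).continuousWithinAt
    have t2 : Tendsto (F w) (𝓝[V \ A] y) (𝓝 (F w y)) :=
      ((hFwd y hyw).continuousAt).continuousWithinAt
    have heq : Tendsto (F z) (𝓝[V \ A] y) (𝓝 (F w y)) := by
      refine t2.congr' ?_
      filter_upwards [self_mem_nhdsWithin] with p hp
      rw [hFweq p ⟨hp.1.2, hp.2⟩, hFzeq p ⟨hp.1.1, hp.2⟩]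
    exact tendsto_nhds_unique t1 heq
  refine ⟨fun y => if h : y ∈ Ω then F y y else 0, ?_, ?_⟩
  · intro z hz
    obtain ⟨hUz, hzUz, hUzΩ, hFzd, hFzeq⟩ := hUF z hz
    have hev : (fun y => if h : y ∈ Ω then F y y else 0) =ᶠ[𝓝 z] F z := by
      filter_upwards [hUz.mem_nhds hzUz] with y hy
      have hyΩ : y ∈ Ω := hUzΩ hy
      rw [dif_pos hyΩ]
      obtain ⟨hUy, hyUy, hUyΩ, hFyd, hFyeq⟩ := hUF y hyΩ
      exact hagree y z y hyΩ hz hyUy hy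
    exact (hFzd z hzUz).congr_of_eventuallyEq hev
  · intro z hz
    obtain ⟨hUz, hzUz, hUzΩ, hFzd, hFzeq⟩ := hUF z hz.1
    have h1 : (fun y => if h : y ∈ Ω then F y y else 0) z = F z z := by
      simp only [dif_pos hz.1]
    rw [h1]
    exact hFzeq z ⟨hzUz, hz.2⟩
end

section
/- Fubini's theorem for weakly C¹ functions (Theorem 4.4): Let E be a complex Banach space, Ω ⊆ ℝ² open and [a,b] × [c,d] ⊆ Ω. Let f : Ω → E be such that for every continuous linear functional e' ∈ E' the scalar function e' ∘ f is continuously differentiable on Ω. Then f is Bochner integrable on [a,b] × [c,d], for each x₂ ∈ [c,d] the function x₁ ↦ f(x₁,x₂) is Bochner integrable on [a,b] (and symmetrically in the other variable), and ∫_{[a,b]×[c,d]} f d(x₁,x₂) = ∫_c^d (∫_a^b f(x₁,x₂) dx₁) dx₂ = ∫_a^b (∫_c^d f(x₁,x₂) dx₂) dx₁. -/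
open MeasureTheory

/-- A weakly `C¹` function on an open set is locally Lipschitz, hence continuous. -/
theorem continuousOn_of_weaklyC1
    {E : Type*} [NormedAddCommGroup E] [NormedSpace ℂ E]
    {Ω : Set (ℝ × ℝ)} (hΩ : IsOpen Ω)
    {f : ℝ × ℝ → E}
    (hf : ∀ e' : E →L[ℂ] ℂ, ContDiffOn ℝ 1 (fun x => e' (f x)) Ω) :
    ContinuousOn f Ω := by
  intro x₀ hx₀
  obtain ⟨r, hr, hB⟩ := Metric.isOpen_iff.1 hΩ x₀ hx₀
  set B : Set (ℝ × ℝ) := Metric.closedBall x₀ (r / 2) with hBdef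
  have hBsub : B ⊆ Ω := fun z hz => hB (Metric.mem_ball.2 (lt_of_le_of_lt (Metric.mem_closedBall.1 hz) (by linarith)))
  have hBK : IsCompact B := isCompact_closedBall _ _
  -- index type: pairs of distinct points of B
  set ι := {p : (ℝ × ℝ) × (ℝ × ℝ) // p.1 ∈ B ∧ p.2 ∈ B ∧ p.1 ≠ p.2} with hι
  set g : ι → (E →L[ℂ] ℂ) →L[ℂ] ℂ := fun i =>
    (‖i.1.1 - i.1.2‖⁻¹ : ℝ) • (NormedSpace.inclusionInDoubleDual ℂ E (f i.1.1 - f i.1.2))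
    with hg
  have hpt : ∀ e' : E →L[ℂ] ℂ, ∃ C, ∀ i, ‖g i e'‖ ≤ C := by
    intro e'
    have hdiff : ∀ x ∈ Ω, DifferentiableAt ℝ (fun x => e' (f x)) x := fun x hx =>
      ((hf e').differentiableOn one_ne_zero).differentiableAt (hΩ.mem_nhds hx)
    have hcont : ContinuousOn (fderiv ℝ (fun x => e' (f x))) Ω :=
      (hf e').continuousOn_fderiv_of_isOpen hΩ le_rfl
    obtain ⟨C, hC⟩ := hBK.exists_bound_of_continuousOn (hcont.mono hBsub)
    refine ⟨C, fun i => ?_⟩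
    obtain ⟨⟨x, y⟩, hx, hy, hxy⟩ := i
    have hmv : ‖e' (f x) - e' (f y)‖ ≤ C * ‖x - y‖ :=
      (convex_closedBall x₀ (r / 2)).norm_image_sub_le_of_norm_fderiv_le
        (fun z hz => hdiff z (hBsub hz)) (fun z hz => hC z hz) hy hx
    have hxy' : ‖x - y‖ ≠ 0 := by
      simpa [sub_eq_zero] using hxy
    have : ‖g ⟨(x, y), hx, hy, hxy⟩ e'‖ = ‖x - y‖⁻¹ * ‖e' (f x) - e' (f y)‖ := by
      simp [hg, norm_smul, abs_of_nonneg (inv_nonneg.2 (norm_nonneg _))]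
    rw [this]
    rw [inv_mul_le_iff₀ (lt_of_le_of_ne (norm_nonneg _) (Ne.symm hxy'))]
    calc ‖e' (f x) - e' (f y)‖ ≤ C * ‖x - y‖ := hmv
      _ = ‖x - y‖ * C := mul_comm _ _
  obtain ⟨C', hC'⟩ := banach_steinhaus hpt
  have key : ∀ x ∈ B, ∀ y ∈ B, ‖f x - f y‖ ≤ max C' 0 * ‖x - y‖ := by
    intro x hx y hy
    rcases eq_or_ne x y with rfl | hxy
    · simp
    · have hxy' : (0:ℝ) < ‖x - y‖ := by
        simpa [norm_pos_iff, sub_eq_zero] using hxy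
      refine NormedSpace.norm_le_dual_bound ℂ _ (by positivity) fun e' => ?_
      have h1 : ‖g ⟨(x, y), hx, hy, hxy⟩ e'‖ ≤ C' * ‖e'‖ := by
        refine ((g ⟨(x, y), hx, hy, hxy⟩).le_opNorm e').trans ?_
        exact mul_le_mul_of_nonneg_right (hC' _) (norm_nonneg _)
      have h2 : ‖g ⟨(x, y), hx, hy, hxy⟩ e'‖ = ‖x - y‖⁻¹ * ‖e' (f x - f y)‖ := by
        simp [hg, norm_smul, abs_of_nonneg (inv_nonneg.2 (norm_nonneg _))]
      rw [h2, inv_mul_le_iff₀ hxy'] at h1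
      calc ‖e' (f x - f y)‖ ≤ ‖x - y‖ * (C' * ‖e'‖) := h1
        _ ≤ max C' 0 * ‖x - y‖ * ‖e'‖ := by
            rw [show ‖x-y‖ * (C' * ‖e'‖) = C' * ‖x-y‖ * ‖e'‖ by ring]
            gcongr
            exact le_max_left _ _
  have hlip : LipschitzOnWith (Real.toNNReal (max C' 0)) f B := by
    rw [lipschitzOnWith_iff_dist_le_mul]
    intro x hx y hy
    rw [dist_eq_norm, dist_eq_norm]
    simpa [Real.coe_toNNReal _ (le_max_right C' 0)] using key x hx y hy
  have : ContinuousAt f x₀ :=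
    (hlip.continuousOn).continuousAt (Metric.closedBall_mem_nhds x₀ (by linarith))
  exact this.continuousWithinAt

/-- Fubini's theorem for weakly `C¹` functions on a rectangle. -/
theorem fubini_weakly_C1
    {E : Type*} [NormedAddCommGroup E] [NormedSpace ℂ E] [CompleteSpace E]
    {Ω : Set (ℝ × ℝ)} (hΩ : IsOpen Ω) {a b c d : ℝ}
    (hrect : Set.Icc a b ×ˢ Set.Icc c d ⊆ Ω)
    {f : ℝ × ℝ → E}
    (hf : ∀ e' : E →L[ℂ] ℂ, ContDiffOn ℝ 1 (fun x => e' (f x)) Ω) :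
    IntegrableOn f (Set.Icc a b ×ˢ Set.Icc c d) ∧
    (∀ x₂ ∈ Set.Icc c d, IntegrableOn (fun x₁ => f (x₁, x₂)) (Set.Icc a b)) ∧
    (∀ x₁ ∈ Set.Icc a b, IntegrableOn (fun x₂ => f (x₁, x₂)) (Set.Icc c d)) ∧
    (∫ x in Set.Icc a b ×ˢ Set.Icc c d, f x) =
      (∫ x₂ in Set.Icc c d, ∫ x₁ in Set.Icc a b, f (x₁, x₂)) ∧
    (∫ x in Set.Icc a b ×ˢ Set.Icc c d, f x) =
      (∫ x₁ in Set.Icc a b, ∫ x₂ in Set.Icc c d, f (x₁, x₂)) := by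
  have hcont : ContinuousOn f (Set.Icc a b ×ˢ Set.Icc c d) :=
    (continuousOn_of_weaklyC1 hΩ hf).mono hrect
  have hK : IsCompact (Set.Icc a b ×ˢ Set.Icc c d) := isCompact_Icc.prod isCompact_Icc
  have hint : IntegrableOn f (Set.Icc a b ×ˢ Set.Icc c d) := hcont.integrableOn_compact hK
  have hs1 : ∀ x₂ ∈ Set.Icc c d, IntegrableOn (fun x₁ => f (x₁, x₂)) (Set.Icc a b) := by
    intro x₂ hx₂
    have : ContinuousOn (fun x₁ => f (x₁, x₂)) (Set.Icc a b) := by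
      refine hcont.comp (Continuous.continuousOn (by fun_prop)) ?_
      exact fun x hx => Set.mk_mem_prod hx hx₂
    exact this.integrableOn_compact isCompact_Icc
  have hs2 : ∀ x₁ ∈ Set.Icc a b, IntegrableOn (fun x₂ => f (x₁, x₂)) (Set.Icc c d) := by
    intro x₁ hx₁
    have : ContinuousOn (fun x₂ => f (x₁, x₂)) (Set.Icc c d) := by
      refine hcont.comp (Continuous.continuousOn (by fun_prop)) ?_
      exact fun x hx => Set.mk_mem_prod hx₁ hx
    exact this.integrableOn_compact isCompact_Icc
  have hvol : (volume : Measure (ℝ × ℝ)) = (volume : Measure ℝ).prod volume :=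
    MeasureTheory.Measure.volume_eq_prod ℝ ℝ
  have hint' : IntegrableOn f (Set.Icc a b ×ˢ Set.Icc c d)
      ((volume : Measure ℝ).prod volume) := by rwa [← hvol]
  have heq2 : (∫ x in Set.Icc a b ×ˢ Set.Icc c d, f x) =
      (∫ x₁ in Set.Icc a b, ∫ x₂ in Set.Icc c d, f (x₁, x₂)) := by
    rw [hvol]
    exact MeasureTheory.setIntegral_prod f hint'
  have hswap : Integrable (Function.uncurry fun x₁ x₂ => f (x₁, x₂))
      ((volume.restrict (Set.Icc a b)).prod (volume.restrict (Set.Icc c d))) := by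
    rw [Measure.prod_restrict]
    exact hint'
  have heq1 : (∫ x in Set.Icc a b ×ˢ Set.Icc c d, f x) =
      (∫ x₂ in Set.Icc c d, ∫ x₁ in Set.Icc a b, f (x₁, x₂)) := by
    rw [heq2]
    exact MeasureTheory.integral_integral_swap hswap
  exact ⟨hint, hs1, hs2, heq1, heq2⟩
end
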